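/- arXiv:2003.10053 — 9 statements merged into one kernel-verified Lean document; each statement's English description precedes it below -/
import Mathlib

section
/- With the continued-fraction data below, suppose p′ and q′ are integers satisfying p p′ + q q′ = 1 and −q < p′ ≤ 0. Then, as rational numbers, ∑_{j=1}^{k−1} 1/(c_{j−1} c_j) = −p′/q. -/
private def bseq (a : ℕ → ℤ) : ℕ → ℤ
  | 0 => 0
  | 1 => 1
  | (n+2) => a (n+2) * bseq a (n+1) - bseq a n

/-- **Lemma 4.1 of the paper.** With the continued-fraction data `c₀ = 1`, `c₁ = a₁`,
`c_i = a_i c_{i−1} − c_{i−2}` for `2 ≤ i ≤ k−1` (where `a_i ≥ 2` for `1 ≤ i ≤ k−1`),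
`q = c_{k−1}`, `p = a_k c_{k−1} − c_{k−2}`, if `p p′ + q q′ = 1` and `−q < p′ ≤ 0`,
then `∑_{j=1}^{k−1} 1/(c_{j−1} c_j) = −p′/q` as rational numbers. -/
theorem sum_inv_c_mul_c_eq (k : ℕ) (hk : 2 ≤ k) (a c : ℕ → ℤ)
    (ha : ∀ i, 1 ≤ i → i ≤ k - 1 → 2 ≤ a i)
    (hc0 : c 0 = 1) (hc1 : c 1 = a 1)
    (hcrec : ∀ i, 2 ≤ i → i ≤ k - 1 → c i = a i * c (i - 1) - c (i - 2))
    (p q p' q' : ℤ) (hq : q = c (k - 1)) (hp : p = a k * c (k - 1) - c (k - 2))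
    (hbez : p * p' + q * q' = 1) (hp'l : -q < p') (hp'r : p' ≤ 0) :
    ∑ j ∈ Finset.Icc 1 (k - 1), (1 : ℚ) / ((c (j - 1) : ℚ) * (c j : ℚ)) =
      -(p' : ℚ) / (q : ℚ) := by
  obtain ⟨m, rfl⟩ : ∃ m, k = m + 2 := ⟨k - 2, by omega⟩
  set b := bseq a with hb
  have hb0 : b 0 = 0 := rfl
  have hb1 : b 1 = 1 := rfl
  have hbrec : ∀ j : ℕ, b (j + 2) = a (j + 2) * b (j + 1) - b j := fun j => rfl
  -- determinant identity
  have hA : ∀ i : ℕ, i + 1 ≤ m + 1 → b (i + 1) * c i - b i * c (i + 1) = 1 := by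
    intro i
    induction i with
    | zero => intro _; simp [hb0, hb1, hc0]
    | succ j ih =>
      intro h
      have hrec : c (j + 2) = a (j + 2) * c (j + 1) - c j :=
        hcrec (j + 2) (by omega) (by omega)
      have ihh := ih (by omega)
      rw [hbrec j, hrec]
      linear_combination ihh
  -- b is nonnegative and increasing
  have hB : ∀ i : ℕ, i + 1 ≤ m + 1 → 0 ≤ b i ∧ b i ≤ b (i + 1) := by
    intro i
    induction i with
    | zero => intro _; simp [hb0, hb1]
    | succ j ih =>
      intro h
      obtain ⟨h1, h2⟩ := ih (by omega)
      have haj : 2 ≤ a (j + 2) := ha (j + 2) (by omega) (by omega)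
      refine ⟨by linarith, ?_⟩
      rw [hbrec j]
      nlinarith
  -- c is positive and increasing
  have hC : ∀ i : ℕ, i + 1 ≤ m + 1 → 1 ≤ c i ∧ c i ≤ c (i + 1) := by
    intro i
    induction i with
    | zero =>
      intro _
      have ha1 : 2 ≤ a 1 := ha 1 (by omega) (by omega)
      exact ⟨by omega, by rw [hc0, hc1]; omega⟩
    | succ j ih =>
      intro h
      obtain ⟨h1, h2⟩ := ih (by omega)
      have haj : 2 ≤ a (j + 2) := ha (j + 2) (by omega) (by omega)
      have hrec : c (j + 2) = a (j + 2) * c (j + 1) - c j :=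
        hcrec (j + 2) (by omega) (by omega)
      refine ⟨by linarith, ?_⟩
      rw [hrec]; nlinarith
  -- c - b is positive and increasing
  have hD : ∀ i : ℕ, i + 1 ≤ m + 1 → 1 ≤ c i - b i ∧ c i - b i ≤ c (i + 1) - b (i + 1) := by
    intro i
    induction i with
    | zero =>
      intro _
      have ha1 : 2 ≤ a 1 := ha 1 (by omega) (by omega)
      refine ⟨by rw [hc0, hb0]; omega, ?_⟩
      rw [hc0, hc1, hb0, hb1]; omega
    | succ j ih =>
      intro h
      obtain ⟨h1, h2⟩ := ih (by omega)
      have haj : 2 ≤ a (j + 2) := ha (j + 2) (by omega) (by omega)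
      have hrec : c (j + 2) = a (j + 2) * c (j + 1) - c j :=
        hcrec (j + 2) (by omega) (by omega)
      refine ⟨by linarith, ?_⟩
      rw [hrec, hbrec j]; nlinarith
  have hcpos : ∀ j : ℕ, j ≤ m + 1 → 1 ≤ c j := by
    intro j hj
    rcases Nat.lt_or_ge j (m + 1) with h | h
    · exact (hC j (by omega)).1
    · have : j = m + 1 := by omega
      subst this
      have h1 := hC m (by omega)
      linarith [h1.1, h1.2]
  -- telescoping sum
  have hsum : ∀ t : ℕ, t ≤ m + 1 →
      ∑ j ∈ Finset.Icc 1 t, (1 : ℚ) / ((c (j - 1) : ℚ) * (c j : ℚ)) =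
        (b t : ℚ) / (c t : ℚ) := by
    intro t
    induction t with
    | zero => intro _; simp [hb0]
    | succ j ih =>
      intro h
      rw [Finset.sum_Icc_succ_top (by omega : 1 ≤ j + 1), ih (by omega)]
      have hAj : b (j + 1) * c j - b j * c (j + 1) = 1 := hA j (by omega)
      have hAq : (b (j + 1) : ℚ) * (c j : ℚ) - (b j : ℚ) * (c (j + 1) : ℚ) = 1 := by
        exact_mod_cast hAj
      have hcj : (c j : ℚ) ≠ 0 := by
        have := hcpos j (by omega); positivity
      have hcj1 : (c (j + 1) : ℚ) ≠ 0 := by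
        have := hcpos (j + 1) (by omega); positivity
      have : ((j : ℕ) + 1 - 1) = j := rfl
      rw [this]
      field_simp
      linear_combination (-1 : ℚ) * hAq
  -- identify p'
  have hAm : b (m + 1) * c m - b m * c (m + 1) = 1 := hA m (by omega)
  have key : p * (-(b (m + 1))) + q * (a (m + 2) * b (m + 1) - b m) = 1 := by
    rw [hp, hq]
    have h1 : (m + 2 : ℕ) - 1 = m + 1 := rfl
    have h2 : (m + 2 : ℕ) - 2 = m := rfl
    rw [h1, h2]
    linear_combination hAm
  have hcop : IsCoprime q p := ⟨q', p', by linear_combination hbez⟩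
  have hmul : p * (p' + b (m + 1)) = q * ((a (m + 2) * b (m + 1) - b m) - q') := by
    linear_combination hbez - key
  have hdvd : q ∣ (p' + b (m + 1)) :=
    hcop.dvd_of_dvd_mul_left ⟨_, hmul⟩
  have hqpos : 1 ≤ q := by
    rw [hq]; exact hcpos (m + 1) (le_refl _)
  have hbnn : 0 ≤ b (m + 1) := by
    have := hB m (by omega); linarith [this.1, this.2]
  have hblt : b (m + 1) < q := by
    have h1 := hD m (by omega)
    have : 1 ≤ c (m + 1) - b (m + 1) := by linarith [h1.1, h1.2]
    rw [hq]
    have h2 : (m + 2 : ℕ) - 1 = m + 1 := rfl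
    rw [h2]; linarith
  have hp'eq : p' = -(b (m + 1)) := by
    obtain ⟨t, ht⟩ := hdvd
    have ht0 : t = 0 := by nlinarith
    rw [ht0, mul_zero] at ht
    linarith
  -- conclude
  have h1 : (m + 2 : ℕ) - 1 = m + 1 := rfl
  rw [h1] at hq
  rw [h1, hsum (m + 1) (le_refl _), hp'eq, hq]
  push_cast
  ring
end

section
/- Let a < b be real numbers, β ∈ ℂ, γ ∈ ℝ with γ ≠ 0, and α ∈ (a,b) with sin(α+β) ≠ 0. Then there exist constants C > 0 and r₀ such that for every integer r ≥ r₀, | ∫_a^b sin(x+β) e^{(r/(4πi)) γ (x−α)²} dx − sin(α+β) · 2π / √(iγr) | ≤ C / r, where √(iγr) denotes the principal square root (so √(iγr) = √(γr) e^{iπ/4} when γ > 0 and √(iγr) = √(|γ|r) e^{−iπ/4} when γ < 0). In other words, ∫_a^b sin(x+β) e^{(r/(4πi)) γ (x−α)²} dx = sin(α+β) (2π/√(iγ)) r^{−1/2} (1 + O(r^{−1/2})) as r → ∞. -/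
open Real MeasureTheory
open Complex Set Filter Topology intervalIntegral

lemma norm_cexp_neg_sq {s : ℂ} (hs : 0 ≤ s.re) (x : ℝ) :
    ‖Complex.exp (-s * (x : ℂ) ^ 2)‖ ≤ 1 := by
  rw [Complex.norm_exp, Real.exp_le_one_iff]
  have : -s * (x:ℂ)^2 = -s * ((x^2 : ℝ) : ℂ) := by push_cast; ring
  rw [this]
  simp only [neg_mul, neg_re, Complex.mul_re, Complex.ofReal_re, Complex.ofReal_im, mul_zero,
    sub_zero, neg_nonpos]
  positivity

lemma norm_two_s (s : ℂ) : ‖2 * s‖ = 2 * ‖s‖ := by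
  rw [norm_mul]; norm_num

lemma norm_coef (s : ℂ) {x : ℝ} (hx : 0 < x) :
    ‖-(2*s)⁻¹ * ((x:ℂ))⁻¹‖ = (2*‖s‖)⁻¹ * x⁻¹ := by
  rw [norm_mul, norm_neg, norm_inv, norm_inv, norm_two_s, Complex.norm_real,
    Real.norm_eq_abs, abs_of_pos hx]

lemma norm_coef2 (s : ℂ) (x : ℝ) :
    ‖(2*s)⁻¹ * (((x:ℂ))^2)⁻¹‖ = (2*‖s‖)⁻¹ * (x^2)⁻¹ := by
  rw [norm_mul, norm_inv, norm_inv, norm_two_s, norm_pow, Complex.norm_real,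
    Real.norm_eq_abs, _root_.sq_abs]

lemma hasDerivAt_cexp_neg_sq (s : ℂ) (x : ℝ) :
    HasDerivAt (fun y : ℝ => Complex.exp (-s * (y : ℂ) ^ 2))
      (Complex.exp (-s * (x : ℂ) ^ 2) * (-s * (2 * x))) x := by
  have h1 : HasDerivAt (fun z : ℂ => -s * z ^ 2) (-s * (2 * (x:ℂ))) (x : ℝ) := by
    simpa using ((hasDerivAt_pow 2 ((x:ℝ):ℂ)).const_mul (-s))
  exact h1.comp_ofReal.cexp

lemma tail_bound {s : ℂ} (hs : 0 < s.re) {T : ℝ} (hT : 0 < T) :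
    ‖∫ u in Set.Ioi T, Complex.exp (-s * (u : ℂ) ^ 2)‖ ≤ 1 / (‖s‖ * T) := by
  have hs0 : s ≠ 0 := fun h => by simp [h] at hs
  have hsn : (0:ℝ) < ‖s‖ := norm_pos_iff.2 hs0
  set f : ℝ → ℂ := fun u => Complex.exp (-s * (u : ℂ) ^ 2) with hf
  have hint : Integrable f := integrable_cexp_neg_mul_sq hs
  set g : ℝ → ℂ := fun x => (2 * s)⁻¹ * ((x : ℂ) ^ 2)⁻¹ * Complex.exp (-s * (x : ℂ) ^ 2) with hg
  have hgnorm : ∀ x : ℝ, x ∈ Set.Ioi T → ‖g x‖ ≤ (2 * ‖s‖)⁻¹ * x ^ (-2 : ℝ) := by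
    intro x hx
    have hx0 : 0 < x := hT.trans hx
    have h1 : ‖g x‖ = (2*‖s‖)⁻¹ * (x^2)⁻¹ * ‖Complex.exp (-s * (x:ℂ)^2)‖ := by
      rw [hg, norm_mul, norm_coef2]
    rw [h1, Real.rpow_neg hx0.le]
    calc (2 * ‖s‖)⁻¹ * (x ^ 2)⁻¹ * ‖Complex.exp (-s * (x:ℂ)^2)‖
        ≤ (2 * ‖s‖)⁻¹ * (x ^ 2)⁻¹ * 1 := by
          gcongr; exact norm_cexp_neg_sq hs.le x
      _ = (2 * ‖s‖)⁻¹ * (x ^ (2:ℝ))⁻¹ := by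
          rw [mul_one, ← Real.rpow_natCast x 2]; norm_num
  have m1 : Measurable fun x : ℝ => ((x:ℂ))^2 := Complex.measurable_ofReal.pow_const 2
  have mg : Measurable g :=
    (measurable_const.mul m1.inv).mul (Complex.measurable_exp.comp (m1.const_mul (-s)))
  have hgint : IntegrableOn g (Set.Ioi T) := by
    refine Integrable.mono' (g := fun x => (2 * ‖s‖)⁻¹ * x ^ (-2:ℝ)) ?_
      mg.aestronglyMeasurable ?_
    · exact ((integrableOn_Ioi_rpow_of_lt (by norm_num) hT).const_mul _)
    · exact (ae_restrict_iff' measurableSet_Ioi).2 (Filter.Eventually.of_forall hgnorm)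
  have key : ∀ X : ℝ, T ≤ X → ∫ x in T..X, f x =
      (-(2*s)⁻¹ * ((X:ℂ))⁻¹) * Complex.exp (-s * (X:ℂ)^2)
      - (-(2*s)⁻¹ * ((T:ℂ))⁻¹) * Complex.exp (-s * (T:ℂ)^2)
      - ∫ x in T..X, g x := by
    intro X hX
    have huIcc : Set.uIcc T X = Set.Icc T X := Set.uIcc_of_le hX
    have hxpos : ∀ x ∈ Set.uIcc T X, 0 < x := by
      intro x hx; rw [huIcc] at hx; exact lt_of_lt_of_le hT hx.1
    have ibp := intervalIntegral.integral_mul_deriv_eq_deriv_mul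
      (u := fun x : ℝ => -(2*s)⁻¹ * ((x:ℂ))⁻¹)
      (u' := fun x : ℝ => (2*s)⁻¹ * (((x:ℂ))^2)⁻¹)
      (v := fun x : ℝ => Complex.exp (-s * (x:ℂ)^2))
      (v' := fun x : ℝ => Complex.exp (-s * (x:ℂ)^2) * (-s * (2*x)))
      (a := T) (b := X) ?_ ?_ ?_ ?_
    · rw [← ibp]
      apply intervalIntegral.integral_congr
      intro x hx
      have hx0 : (x:ℂ) ≠ 0 := Complex.ofReal_ne_zero.2 (hxpos x hx).ne'
      simp only [hf]
      field_simp
    · intro x hx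
      have hx0 : ((x:ℝ):ℂ) ≠ 0 := Complex.ofReal_ne_zero.2 (hxpos x hx).ne'
      have h1 : HasDerivAt (fun z : ℂ => -(2*s)⁻¹ * z⁻¹) (-(2*s)⁻¹ * -(((x:ℂ))^2)⁻¹) (x:ℂ) :=
        (hasDerivAt_inv hx0).const_mul _
      have h2 := h1.comp_ofReal
      convert h2 using 1
      · rfl
      ring
    · intro x _
      exact hasDerivAt_cexp_neg_sq s x
    · apply ContinuousOn.intervalIntegrable
      apply ContinuousOn.mul continuousOn_const
      apply ContinuousOn.inv₀
      · fun_prop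
      · intro x hx
        exact pow_ne_zero 2 (Complex.ofReal_ne_zero.2 (hxpos x hx).ne')
    · apply Continuous.intervalIntegrable
      fun_prop
  have h1 : Tendsto (fun X => ∫ x in T..X, f x) atTop (𝓝 (∫ u in Set.Ioi T, f u)) :=
    intervalIntegral_tendsto_integral_Ioi T hint.integrableOn tendsto_id
  have h2 : Tendsto (fun X => ∫ x in T..X, g x) atTop (𝓝 (∫ x in Set.Ioi T, g x)) :=
    intervalIntegral_tendsto_integral_Ioi T hgint tendsto_id
  have h3 : Tendsto (fun X : ℝ => (-(2*s)⁻¹ * ((X:ℂ))⁻¹) * Complex.exp (-s * (X:ℂ)^2))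
      atTop (𝓝 0) := by
    have hb : Tendsto (fun X : ℝ => (2*‖s‖)⁻¹ * X⁻¹) atTop (𝓝 (0:ℝ)) := by
      simpa using tendsto_inv_atTop_zero.const_mul (2*‖s‖)⁻¹
    apply squeeze_zero_norm' ?_ hb
    filter_upwards [eventually_gt_atTop 0] with X hX
    rw [norm_mul, norm_coef s hX]
    calc (2*‖s‖)⁻¹ * X⁻¹ * ‖Complex.exp (-s * (X:ℂ)^2)‖ ≤ (2*‖s‖)⁻¹ * X⁻¹ * 1 := by
          gcongr; exact norm_cexp_neg_sq hs.le X
      _ = (2*‖s‖)⁻¹ * X⁻¹ := mul_one _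
  have heq : (fun X => ∫ x in T..X, f x) =ᶠ[atTop]
      (fun X => (-(2*s)⁻¹ * ((X:ℂ))⁻¹) * Complex.exp (-s * (X:ℂ)^2)
        - (-(2*s)⁻¹ * ((T:ℂ))⁻¹) * Complex.exp (-s * (T:ℂ)^2) - ∫ x in T..X, g x) := by
    filter_upwards [eventually_ge_atTop T] with X hX
    exact key X hX
  have hlim : Tendsto (fun X => ∫ x in T..X, f x) atTop
      (𝓝 (0 - (-(2*s)⁻¹ * ((T:ℂ))⁻¹) * Complex.exp (-s * (T:ℂ)^2) - ∫ x in Set.Ioi T, g x)) :=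
    Tendsto.congr' heq.symm ((h3.sub tendsto_const_nhds).sub h2)
  have hval : (∫ u in Set.Ioi T, f u)
      = 0 - (-(2*s)⁻¹ * ((T:ℂ))⁻¹) * Complex.exp (-s * (T:ℂ)^2) - ∫ x in Set.Ioi T, g x :=
    tendsto_nhds_unique h1 hlim
  rw [hval]
  have hb1 : ‖(-(2*s)⁻¹ * ((T:ℂ))⁻¹) * Complex.exp (-s * (T:ℂ)^2)‖ ≤ (2*‖s‖)⁻¹ * T⁻¹ := by
    rw [norm_mul, norm_coef s hT]
    calc (2*‖s‖)⁻¹ * T⁻¹ * ‖Complex.exp (-s * (T:ℂ)^2)‖ ≤ (2*‖s‖)⁻¹ * T⁻¹ * 1 := by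
          gcongr; exact norm_cexp_neg_sq hs.le T
      _ = (2*‖s‖)⁻¹ * T⁻¹ := mul_one _
  have hb2 : ‖∫ x in Set.Ioi T, g x‖ ≤ (2*‖s‖)⁻¹ * T⁻¹ := by
    have hle : ‖∫ x in Set.Ioi T, g x‖ ≤ ∫ x in Set.Ioi T, (2 * ‖s‖)⁻¹ * x ^ (-2:ℝ) := by
      apply norm_integral_le_of_norm_le ((integrableOn_Ioi_rpow_of_lt (by norm_num) hT).const_mul _)
      exact (ae_restrict_iff' measurableSet_Ioi).2 (Filter.Eventually.of_forall hgnorm)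
    have hval2 : ∫ x in Set.Ioi T, (2 * ‖s‖)⁻¹ * x ^ (-2:ℝ) = (2*‖s‖)⁻¹ * T⁻¹ := by
      rw [MeasureTheory.integral_const_mul, integral_Ioi_rpow_of_lt (by norm_num) hT]
      norm_num [Real.rpow_neg_one]
    rw [hval2] at hle
    exact hle
  calc ‖0 - (-(2*s)⁻¹ * ((T:ℂ))⁻¹) * Complex.exp (-s * (T:ℂ)^2) - ∫ x in Set.Ioi T, g x‖
      ≤ ‖0 - (-(2*s)⁻¹ * ((T:ℂ))⁻¹) * Complex.exp (-s * (T:ℂ)^2)‖ + ‖∫ x in Set.Ioi T, g x‖ :=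
        norm_sub_le _ _
    _ ≤ (2*‖s‖)⁻¹ * T⁻¹ + (2*‖s‖)⁻¹ * T⁻¹ := by
        rw [zero_sub, norm_neg]; exact add_le_add hb1 hb2
    _ = 1 / (‖s‖ * T) := by field_simp; ring


lemma fresnel_bound {lam : ℝ} (hlam : lam ≠ 0) {A B : ℝ} (hA : A < 0) (hB : 0 < B) :
    ‖(∫ u in A..B, Complex.exp (-(Complex.I * lam) * (u : ℂ) ^ 2)) -
        ((π : ℂ) / (Complex.I * lam)) ^ (1/2 : ℂ)‖ ≤ (1/B + 1/(-A)) / |lam| := by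
  have hlamC : ((lam : ℂ)) ≠ 0 := Complex.ofReal_ne_zero.2 hlam
  have hIlam : Complex.I * (lam : ℂ) ≠ 0 := mul_ne_zero Complex.I_ne_zero hlamC
  -- the ε-perturbed bound
  have step : ∀ ε : ℝ, 0 < ε →
      ‖(∫ u in A..B, Complex.exp (-((ε : ℂ) + Complex.I * lam) * (u : ℂ) ^ 2)) -
        ((π : ℂ) / ((ε : ℂ) + Complex.I * lam)) ^ (1/2 : ℂ)‖ ≤ (1/B + 1/(-A)) / |lam| := by
    intro ε hε
    set s : ℂ := (ε : ℂ) + Complex.I * lam with hsdef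
    have hsre : s.re = ε := by simp [hsdef]
    have hsim : s.im = lam := by simp [hsdef]
    have hs : 0 < s.re := by rw [hsre]; exact hε
    have hint : Integrable (fun u : ℝ => Complex.exp (-s * (u:ℂ)^2)) :=
      integrable_cexp_neg_mul_sq hs
    have htotal : ∫ u : ℝ, Complex.exp (-s * (u:ℂ)^2) = ((π:ℂ)/s) ^ (1/2 : ℂ) :=
      integral_gaussian_complex hs
    have hsplit1 : (∫ u in Set.Iic B, Complex.exp (-s * (u:ℂ)^2))
        + (∫ u in Set.Ioi B, Complex.exp (-s * (u:ℂ)^2))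
        = ((π:ℂ)/s) ^ (1/2 : ℂ) := by
      rw [← htotal]
      exact integral_Iic_add_Ioi hint.integrableOn hint.integrableOn
    have hsplit2 : (∫ u in Set.Iic B, Complex.exp (-s * (u:ℂ)^2))
        - (∫ u in Set.Iic A, Complex.exp (-s * (u:ℂ)^2))
        = ∫ u in A..B, Complex.exp (-s * (u:ℂ)^2) :=
      integral_Iic_sub_Iic hint.integrableOn hint.integrableOn
    have hleft : (∫ u in Set.Iic A, Complex.exp (-s * (u:ℂ)^2))
        = ∫ u in Set.Ioi (-A), Complex.exp (-s * (u:ℂ)^2) := by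
      rw [show Set.Iic A = Set.Iic (-(-A)) by ring_nf]
      rw [← integral_comp_neg_Ioi]
      congr 1
      ext u
      push_cast
      ring_nf
    have key : (∫ u in A..B, Complex.exp (-s * (u:ℂ)^2)) - ((π:ℂ)/s) ^ (1/2 : ℂ)
        = - (∫ u in Set.Ioi (-A), Complex.exp (-s * (u:ℂ)^2))
          - (∫ u in Set.Ioi B, Complex.exp (-s * (u:ℂ)^2)) := by
      rw [← hsplit2, ← hsplit1, hleft]
      ring
    have hnorms : |lam| ≤ ‖s‖ := by
      calc |lam| = |s.im| := by rw [hsim]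
        _ ≤ ‖s‖ := Complex.abs_im_le_norm s
        _ = ‖s‖ := rfl
    have hbound1 := tail_bound hs (neg_pos.2 hA)
    have hbound2 := tail_bound hs hB
    have habs : (0:ℝ) < |lam| := abs_pos.2 hlam
    rw [key]
    calc ‖- (∫ u in Set.Ioi (-A), Complex.exp (-s * (u:ℂ)^2))
          - (∫ u in Set.Ioi B, Complex.exp (-s * (u:ℂ)^2))‖
        ≤ ‖∫ u in Set.Ioi (-A), Complex.exp (-s * (u:ℂ)^2)‖
          + ‖∫ u in Set.Ioi B, Complex.exp (-s * (u:ℂ)^2)‖ := by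
          refine (norm_sub_le _ _).trans ?_; rw [norm_neg]
      _ ≤ 1 / (‖s‖ * (-A)) + 1 / (‖s‖ * B) := add_le_add hbound1 hbound2
      _ ≤ 1 / (|lam| * (-A)) + 1 / (|lam| * B) := by
          have h1 : (0:ℝ) < -A := neg_pos.2 hA
          exact add_le_add
            (one_div_le_one_div_of_le (mul_pos habs h1)
              (mul_le_mul_of_nonneg_right hnorms h1.le))
            (one_div_le_one_div_of_le (mul_pos habs hB)
              (mul_le_mul_of_nonneg_right hnorms hB.le))
      _ = (1/B + 1/(-A)) / |lam| := by
          simp only [one_div, div_eq_mul_inv, mul_inv]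
          ring
  -- pass to the limit ε → 0⁺
  have hform : (π:ℂ)/(Complex.I*(lam:ℂ)) = ((-(π/lam) : ℝ) : ℂ) * Complex.I := by
    rw [div_eq_iff hIlam]
    push_cast
    have h2 : Complex.I * Complex.I = -1 := Complex.I_mul_I
    field_simp
    ring_nf
    rw [Complex.I_sq]
    ring
  have hmem : (π:ℂ)/(Complex.I*(lam:ℂ)) ∈ Complex.slitPlane := by
    rw [Complex.mem_slitPlane_iff, hform]
    right
    simp only [Complex.mul_im, Complex.ofReal_re, Complex.I_im, Complex.ofReal_im, Complex.I_re,
      mul_zero, mul_one, zero_mul, add_zero]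
    simp only [ne_eq, neg_eq_zero, div_eq_zero_iff, not_or]
    exact ⟨Real.pi_ne_zero, hlam⟩
  have h_int : Tendsto (fun ε : ℝ => ∫ u in A..B,
      Complex.exp (-((ε:ℂ) + Complex.I * lam) * (u:ℂ)^2)) (𝓝[>] (0:ℝ))
      (𝓝 (∫ u in A..B, Complex.exp (-(Complex.I * lam) * (u:ℂ)^2))) := by
    apply intervalIntegral.tendsto_integral_filter_of_dominated_convergence
      (bound := fun _ : ℝ => (1:ℝ))
    · filter_upwards with ε
      apply Continuous.aestronglyMeasurable
      fun_prop
    · filter_upwards [self_mem_nhdsWithin] with ε (hε : 0 < ε)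
      filter_upwards with x _
      apply norm_cexp_neg_sq
      simp only [Complex.add_re, Complex.ofReal_re, Complex.mul_re, Complex.I_re,
        Complex.ofReal_im, Complex.I_im, zero_mul, mul_zero, one_mul]
      simp [hε.le]
    · exact intervalIntegrable_const
    · filter_upwards with x _
      have hc : ContinuousAt (fun ε : ℝ =>
          Complex.exp (-((ε:ℂ) + Complex.I * lam) * (x:ℂ)^2)) 0 := by fun_prop
      have := hc.tendsto.mono_left (nhdsWithin_le_nhds (s := Set.Ioi (0:ℝ)))
      simpa using this
  have h_cpow : Tendsto (fun ε : ℝ => ((π:ℂ)/((ε:ℂ) + Complex.I * lam)) ^ (1/2 : ℂ))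
      (𝓝[>] (0:ℝ)) (𝓝 (((π:ℂ)/(Complex.I * lam)) ^ (1/2 : ℂ))) := by
    have c1 : ContinuousAt (fun ε : ℝ => (π:ℂ)/((ε:ℂ) + Complex.I * lam)) 0 := by
      apply ContinuousAt.div continuousAt_const
      · exact (Complex.continuous_ofReal.continuousAt).add continuousAt_const
      · simpa using hIlam
    have h0 : (fun ε : ℝ => (π:ℂ)/((ε:ℂ) + Complex.I * lam)) 0 ∈ Complex.slitPlane := by
      simpa using hmem
    have c3 : ContinuousAt
        (fun ε : ℝ => ((π:ℂ)/((ε:ℂ) + Complex.I * lam)) ^ (1/2:ℂ)) 0 :=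
      ContinuousAt.cpow c1 continuousAt_const h0
    have c4 := c3.tendsto.mono_left (nhdsWithin_le_nhds (s := Set.Ioi (0:ℝ)))
    simpa using c4
  have hT : Tendsto (fun ε : ℝ => ‖(∫ u in A..B,
        Complex.exp (-((ε:ℂ) + Complex.I * lam) * (u:ℂ)^2))
      - ((π:ℂ)/((ε:ℂ) + Complex.I * lam)) ^ (1/2 : ℂ)‖) (𝓝[>] (0:ℝ))
      (𝓝 ‖(∫ u in A..B, Complex.exp (-(Complex.I * lam) * (u:ℂ)^2))
        - ((π:ℂ)/(Complex.I * lam)) ^ (1/2 : ℂ)‖) :=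
    (h_int.sub h_cpow).norm
  exact le_of_tendsto hT (by
    filter_upwards [self_mem_nhdsWithin] with ε (hε : 0 < ε)
    exact step ε hε)


lemma amplitude_bound {a b α : ℝ} (hab : a ≤ b) (β : ℂ) :
    ∃ K : ℝ, 0 < K ∧ ∀ lam : ℝ, lam ≠ 0 →
      ‖∫ x in a..b, (Complex.sin ((x:ℂ) + β) - Complex.sin ((α:ℂ) + β)) *
          Complex.exp (-(Complex.I * lam) * ((x:ℂ) - α) ^ 2)‖ ≤ K / |lam| := by
  set f : ℂ → ℂ := fun z => Complex.sin (z + β) with hfdef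
  have hf : Differentiable ℂ f :=
    Complex.differentiable_sin.comp (differentiable_id.add_const β)
  set g : ℂ → ℂ := dslope f (α:ℂ) with hgdef
  have hganal : ∀ z : ℂ, AnalyticAt ℂ g z := by
    intro z
    rcases eq_or_ne z ((α:ℂ)) with rfl | hz
    · obtain ⟨p, hp⟩ := hf.analyticAt ((α:ℂ))
      exact (hp.has_fpower_series_dslope_fslope).analyticAt
    · have hs : AnalyticAt ℂ (slope f ((α:ℂ))) z := by
        have h1 : AnalyticAt ℂ (fun w : ℂ => (w - (α:ℂ))⁻¹) z :=
          ((analyticAt_id.sub analyticAt_const).inv (sub_ne_zero.2 hz))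
        have h2 : AnalyticAt ℂ (fun w : ℂ => f w - f ((α:ℂ))) z :=
          (hf.analyticAt z).sub analyticAt_const
        have := h1.mul h2
        apply this.congr
        filter_upwards with w
        simp [slope_def_field, div_eq_inv_mul]
      exact hs.congr (dslope_eventuallyEq_slope_of_ne f hz).symm
  have hgdiff : Differentiable ℂ g := fun z => (hganal z).differentiableAt
  have hgcont : Continuous fun x : ℝ => g ((x:ℂ)) :=
    hgdiff.continuous.comp Complex.continuous_ofReal
  have hdgcont : Continuous fun x : ℝ => deriv g ((x:ℂ)) := by
    have h1 : Continuous (deriv g) := by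
      have : ∀ z : ℂ, ContinuousAt (deriv g) z := by
        intro z
        have h2 : ContinuousAt (fderiv ℂ g) z := (hganal z).fderiv.continuousAt
        have h3 : ContinuousAt (fun w => fderiv ℂ g w 1) z := by
          exact (ContinuousLinearMap.apply ℂ ℂ (1:ℂ)).continuous.continuousAt.comp h2
        apply h3.congr
        filter_upwards with w
        rw [fderiv_apply_one_eq_deriv]
      exact continuous_iff_continuousAt.2 this
    exact h1.comp Complex.continuous_ofReal
  obtain ⟨M, hM⟩ := (isCompact_Icc (a := a) (b := b)).exists_bound_of_continuousOn
    hgcont.continuousOn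
  obtain ⟨M', hM'⟩ := (isCompact_Icc (a := a) (b := b)).exists_bound_of_continuousOn
    hdgcont.continuousOn
  have hM0 : 0 ≤ M := le_trans (norm_nonneg _) (hM a (by constructor <;> linarith))
  have hM'0 : 0 ≤ M' := le_trans (norm_nonneg _) (hM' a (by constructor <;> linarith))
  have hba : (0:ℝ) ≤ b - a := by linarith
  refine ⟨M + M' * (b - a) / 2 + 1, by nlinarith [mul_nonneg hM'0 hba], ?_⟩
  intro lam hlam
  have hlamC : ((lam:ℂ)) ≠ 0 := Complex.ofReal_ne_zero.2 hlam
  have habs : (0:ℝ) < |lam| := abs_pos.2 hlam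
  set E : ℝ → ℂ := fun x => Complex.exp (-(Complex.I * lam) * ((x:ℂ) - α) ^ 2) with hEdef
  have hEnorm : ∀ x : ℝ, ‖E x‖ ≤ 1 := by
    intro x
    have : E x = Complex.exp (-(Complex.I * lam) * ((((x - α : ℝ)):ℂ)) ^ 2) := by
      rw [hEdef]; push_cast; ring_nf
    rw [this]
    exact norm_cexp_neg_sq (by simp) (x - α)
  have hcoef : ‖Complex.I / (2 * (lam:ℂ))‖ = (2 * |lam|)⁻¹ := by
    rw [norm_div, Complex.norm_I, norm_mul]
    simp [Complex.norm_real, Real.norm_eq_abs]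
  -- derivative of E
  have hEderiv : ∀ x : ℝ, HasDerivAt E
      (E x * (-(Complex.I * lam) * (2 * ((x:ℂ) - α)))) x := by
    intro x
    have h1 : HasDerivAt (fun z : ℂ => (z - (α:ℂ)) ^ 2) (2 * ((x:ℂ) - α)) ((x:ℝ):ℂ) := by
      simpa using (((hasDerivAt_id ((x:ℝ):ℂ)).sub_const ((α:ℂ))).fun_pow 2)
    have h2 := (h1.const_mul (-(Complex.I * lam))).comp_ofReal
    exact h2.cexp
  -- integration by parts
  have ibp := intervalIntegral.integral_mul_deriv_eq_deriv_mul
    (u := fun x : ℝ => Complex.I / (2 * (lam:ℂ)) * g ((x:ℂ)))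
    (u' := fun x : ℝ => Complex.I / (2 * (lam:ℂ)) * deriv g ((x:ℂ)))
    (v := E) (v' := fun x : ℝ => E x * (-(Complex.I * lam) * (2 * ((x:ℂ) - α))))
    (a := a) (b := b)
    (fun x _ => (((hgdiff ((x:ℂ))).hasDerivAt.comp_ofReal).const_mul _))
    (fun x _ => hEderiv x)
    ((continuous_const.mul hdgcont).intervalIntegrable a b)
    (by apply Continuous.intervalIntegrable; fun_prop)
  have hcongr : ∫ x in a..b, (Complex.sin ((x:ℂ) + β) - Complex.sin ((α:ℂ) + β)) * E x
      = ∫ x in a..b, (Complex.I / (2 * (lam:ℂ)) * g ((x:ℂ))) *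
          (E x * (-(Complex.I * lam) * (2 * ((x:ℂ) - α)))) := by
    apply intervalIntegral.integral_congr
    intro x _
    show (Complex.sin ((x:ℂ) + β) - Complex.sin ((α:ℂ) + β)) * E x
      = Complex.I / (2 * (lam:ℂ)) * g ((x:ℂ)) * (E x * (-(Complex.I * lam) * (2 * ((x:ℂ) - α))))
    have hfact : Complex.sin ((x:ℂ) + β) - Complex.sin ((α:ℂ) + β)
        = ((x:ℂ) - α) * g ((x:ℂ)) := by
      have := sub_smul_dslope f ((α:ℂ)) ((x:ℂ))
      rw [smul_eq_mul] at this
      exact this.symm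
    rw [hfact]
    have hI : Complex.I * Complex.I = -1 := Complex.I_mul_I
    field_simp
    linear_combination (g ((x:ℂ)) * E x * ((x:ℂ) - (α:ℂ))) * hI
  rw [hcongr, ibp]
  have hub : ‖Complex.I / (2 * (lam:ℂ)) * g ((b:ℂ)) * E b‖ ≤ (2*|lam|)⁻¹ * M := by
    rw [norm_mul, norm_mul, hcoef]
    calc (2*|lam|)⁻¹ * ‖g ((b:ℂ))‖ * ‖E b‖ ≤ (2*|lam|)⁻¹ * M * 1 := by
          gcongr
          · exact hM b ⟨hab, le_refl b⟩
          · exact hEnorm b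
      _ = (2*|lam|)⁻¹ * M := mul_one _
  have hua : ‖Complex.I / (2 * (lam:ℂ)) * g ((a:ℂ)) * E a‖ ≤ (2*|lam|)⁻¹ * M := by
    rw [norm_mul, norm_mul, hcoef]
    calc (2*|lam|)⁻¹ * ‖g ((a:ℂ))‖ * ‖E a‖ ≤ (2*|lam|)⁻¹ * M * 1 := by
          gcongr
          · exact hM a ⟨le_refl a, hab⟩
          · exact hEnorm a
      _ = (2*|lam|)⁻¹ * M := mul_one _
  have hint : ‖∫ x in a..b, Complex.I / (2 * (lam:ℂ)) * deriv g ((x:ℂ)) * E x‖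
      ≤ (2*|lam|)⁻¹ * M' * |b - a| := by
    apply intervalIntegral.norm_integral_le_of_norm_le_const
    intro x hx
    rw [Set.uIoc_of_le hab] at hx
    have hx' : x ∈ Set.Icc a b := ⟨hx.1.le, hx.2⟩
    rw [norm_mul, norm_mul, hcoef]
    calc (2*|lam|)⁻¹ * ‖deriv g ((x:ℂ))‖ * ‖E x‖ ≤ (2*|lam|)⁻¹ * M' * 1 := by
          gcongr
          · exact hM' x hx'
          · exact hEnorm x
      _ = (2*|lam|)⁻¹ * M' := mul_one _
  calc ‖Complex.I / (2 * (lam:ℂ)) * g ((b:ℂ)) * E b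
        - Complex.I / (2 * (lam:ℂ)) * g ((a:ℂ)) * E a
        - ∫ x in a..b, Complex.I / (2 * (lam:ℂ)) * deriv g ((x:ℂ)) * E x‖
      ≤ ‖Complex.I / (2 * (lam:ℂ)) * g ((b:ℂ)) * E b‖
        + ‖Complex.I / (2 * (lam:ℂ)) * g ((a:ℂ)) * E a‖
        + ‖∫ x in a..b, Complex.I / (2 * (lam:ℂ)) * deriv g ((x:ℂ)) * E x‖ :=
        (norm_sub_le _ _).trans (add_le_add_left (norm_sub_le _ _) _)
    _ ≤ (2*|lam|)⁻¹ * M + (2*|lam|)⁻¹ * M + (2*|lam|)⁻¹ * M' * |b - a| :=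
        add_le_add (add_le_add hub hua) hint
    _ ≤ (M + M' * (b - a) / 2 + 1) / |lam| := by
        rw [_root_.abs_of_nonneg hba]
        have h2 : (2*|lam|)⁻¹ * M + (2*|lam|)⁻¹ * M + (2*|lam|)⁻¹ * M' * (b-a)
            = (M + M'*(b-a)/2) * |lam|⁻¹ := by
          field_simp
          ring
        rw [h2, div_eq_mul_inv]
        exact mul_le_mul_of_nonneg_right (by linarith) (inv_nonneg.2 habs.le)

section Main
open Complex Set Filter Topology intervalIntegral

lemma ofReal_mul_cpow_half {t : ℝ} (ht : 0 < t) {z : ℂ} (hz : z ≠ 0) :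
    ((t:ℂ) * z) ^ (1/2 : ℂ) = (t:ℂ) ^ (1/2:ℂ) * z ^ (1/2:ℂ) := by
  have ht' : ((t:ℂ)) ≠ 0 := Complex.ofReal_ne_zero.2 ht.ne'
  rw [Complex.cpow_def_of_ne_zero (mul_ne_zero ht' hz), Complex.log_ofReal_mul ht hz,
    add_mul, Complex.exp_add, ← Complex.cpow_def_of_ne_zero hz]
  congr 1
  rw [Complex.cpow_def_of_ne_zero ht', Complex.ofReal_log ht.le]

end Main


/-- **Lemma (Gaussian integral with stationary point inside).**
If `a < α < b`, `γ ∈ ℝ \ {0}`, `β ∈ ℂ` and `sin(α+β) ≠ 0`, then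
`∫_a^b sin(x+β) e^{(r/(4πi)) γ (x−α)²} dx = sin(α+β) (2π/√(iγ)) r^{−1/2} (1 + O(r^{−1/2}))`,
i.e. the integral differs from `sin(α+β) · 2π/√(iγr)` by `O(1/r)`, where `√w = e^{(1/2) log w}`
is the principal square root. -/
theorem gaussian_integral_stationary_inside (a b : ℝ) (hab : a < b) (β : ℂ)
    (γ : ℝ) (hγ : γ ≠ 0) (α : ℝ) (hα : α ∈ Set.Ioo a b)
    (hsin : Complex.sin ((α : ℂ) + β) ≠ 0) :
    ∃ C : ℝ, 0 < C ∧ ∃ r₀ : ℕ, ∀ r : ℕ, r₀ ≤ r →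
      ‖(∫ x : ℝ in a..b, Complex.sin ((x : ℂ) + β) *
            Complex.exp (((r : ℂ) / (4 * (π : ℂ) * Complex.I)) * (γ : ℂ) *
              ((x : ℂ) - (α : ℂ)) ^ 2)) -
          Complex.sin ((α : ℂ) + β) * 2 * (π : ℂ) /
            (Complex.I * (γ : ℂ) * (r : ℂ)) ^ ((1 : ℂ) / 2)‖ ≤
        C / (r : ℝ) := by
  obtain ⟨ha, hb⟩ := hα
  set A : ℝ := a - α with hAdef
  set B : ℝ := b - α with hBdef
  have hA : A < 0 := by simp [hAdef]; linarith
  have hB : 0 < B := by simp [hBdef]; linarith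
  obtain ⟨K, hK, hKbound⟩ := amplitude_bound (le_of_lt hab) (α := α) β
  set S : ℂ := Complex.sin ((α : ℂ) + β) with hSdef
  set C₁ : ℝ := (‖S‖ * (1/B + 1/(-A)) + K) * (4 * π) / |γ| with hC₁def
  have hA' : (0:ℝ) < -A := neg_pos.2 hA
  have hγabs : (0:ℝ) < |γ| := abs_pos.2 hγ
  have hC₁ : 0 < C₁ := by
    have h1 : 0 < 1/B + 1/(-A) := add_pos (one_div_pos.2 hB) (one_div_pos.2 hA')
    have h2 : 0 < ‖S‖ := norm_pos_iff.2 hsin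
    have h3 : 0 < ‖S‖ * (1/B + 1/(-A)) + K := by positivity
    rw [hC₁def]
    positivity
  refine ⟨C₁, hC₁, 1, ?_⟩
  intro r hr
  have hrpos : (0:ℝ) < r := by exact_mod_cast hr
  set lam : ℝ := γ * r / (4 * π) with hlamdef
  have hlam : lam ≠ 0 := by
    rw [hlamdef]
    have hπpos := Real.pi_pos
    exact div_ne_zero (mul_ne_zero hγ hrpos.ne') (by positivity)
  have habslam : |lam| = |γ| * r / (4 * π) := by
    rw [hlamdef, abs_div, abs_mul]
    rw [abs_of_pos hrpos, abs_of_pos (by positivity : (0:ℝ) < 4 * π)]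
  -- exponent identity
  have hexp : ∀ x : ℝ, ((r : ℂ) / (4 * (π:ℂ) * Complex.I)) * (γ:ℂ) * ((x:ℂ) - α) ^ 2
      = -(Complex.I * (lam:ℂ)) * ((x:ℂ) - α) ^ 2 := by
    intro x
    have hlamC : ((lam:ℝ):ℂ) = (γ:ℂ) * r / (4 * (π:ℂ)) := by
      rw [hlamdef]; push_cast; ring
    congr 1
    rw [show (4*(π:ℂ)*Complex.I) = Complex.I * (4*(π:ℂ)) by ring, ← div_div,
      Complex.div_I, hlamC]
    ring
  -- split the integral
  have hcont1 : Continuous fun x : ℝ => Complex.exp (-(Complex.I * (lam:ℂ)) * ((x:ℂ) - α) ^ 2) := by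
    fun_prop
  have hcont2 : Continuous fun x : ℝ =>
      (Complex.sin ((x:ℂ) + β) - S) * Complex.exp (-(Complex.I * (lam:ℂ)) * ((x:ℂ) - α) ^ 2) := by
    rw [hSdef]; fun_prop
  have hsplit : (∫ x : ℝ in a..b, Complex.sin ((x : ℂ) + β) *
        Complex.exp (((r : ℂ) / (4 * (π:ℂ) * Complex.I)) * (γ:ℂ) * ((x:ℂ) - α) ^ 2))
      = S * (∫ x : ℝ in a..b, Complex.exp (-(Complex.I * (lam:ℂ)) * ((x:ℂ) - α) ^ 2))
        + ∫ x : ℝ in a..b, (Complex.sin ((x:ℂ) + β) - S) *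
            Complex.exp (-(Complex.I * (lam:ℂ)) * ((x:ℂ) - α) ^ 2) := by
    rw [← intervalIntegral.integral_const_mul, ← intervalIntegral.integral_add
      ((continuous_const.fun_mul hcont1).intervalIntegrable a b) (hcont2.intervalIntegrable a b)]
    apply intervalIntegral.integral_congr
    intro x _
    simp only []
    rw [hexp x]
    ring
  -- substitution x ↦ x - α
  have hsub : (∫ x : ℝ in a..b, Complex.exp (-(Complex.I * (lam:ℂ)) * ((x:ℂ) - α) ^ 2))
      = ∫ u : ℝ in A..B, Complex.exp (-(Complex.I * (lam:ℂ)) * (u:ℂ) ^ 2) := by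
    have h := intervalIntegral.integral_comp_sub_right (a := a) (b := b)
      (fun u : ℝ => Complex.exp (-(Complex.I * (lam:ℂ)) * (u:ℂ) ^ 2)) α
    rw [hAdef, hBdef, ← h]
    apply intervalIntegral.integral_congr
    intro x _
    simp only []
    push_cast
    ring_nf
  -- cpow algebra
  have hγC : ((γ:ℝ):ℂ) ≠ 0 := Complex.ofReal_ne_zero.2 hγ
  have hrC : ((r:ℕ):ℂ) ≠ 0 := Nat.cast_ne_zero.2 (by omega)
  have hIγr : Complex.I * (γ:ℂ) * (r:ℂ) ≠ 0 :=
    mul_ne_zero (mul_ne_zero Complex.I_ne_zero hγC) hrC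
  have hargIγr : (Complex.I * (γ:ℂ) * (r:ℂ)).arg ≠ π := by
    intro h
    rw [Complex.arg_eq_pi_iff] at h
    have him : (Complex.I * (γ:ℂ) * (r:ℂ)).im = γ * r := by simp
    rw [him] at h
    exact (mul_ne_zero hγ hrpos.ne') h.2
  have hcpow : ((π:ℂ) / (Complex.I * (lam:ℂ))) ^ (1/2 : ℂ)
      = 2 * (π:ℂ) / (Complex.I * (γ:ℂ) * (r:ℂ)) ^ ((1:ℂ)/2) := by
    have hbase : (π:ℂ) / (Complex.I * (lam:ℂ))
        = ((4 * π^2 : ℝ):ℂ) * (Complex.I * (γ:ℂ) * (r:ℂ))⁻¹ := by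
      have hπ : ((π:ℝ):ℂ) ≠ 0 := Complex.ofReal_ne_zero.2 Real.pi_ne_zero
      have hlamC : ((lam:ℝ):ℂ) = (γ:ℂ) * r / (4 * (π:ℂ)) := by
        rw [hlamdef]; push_cast; ring
      rw [hlamC]
      push_cast
      field_simp
    rw [hbase, ofReal_mul_cpow_half (by positivity) (inv_ne_zero hIγr)]
    rw [Complex.inv_cpow _ _ hargIγr]
    have hsq : ((4 * π^2 : ℝ):ℂ) ^ (1/2:ℂ) = 2 * (π:ℂ) := by
      have h1 : ((4 * π^2 : ℝ) ^ ((1:ℝ)/2) : ℝ) = 2 * π := by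
        rw [show (4 * π^2 : ℝ) = (2*π)^2 by ring, ← Real.sqrt_eq_rpow,
          Real.sqrt_sq (by positivity)]
      have h2 := Complex.ofReal_cpow (by positivity : (0:ℝ) ≤ 4 * π^2) ((1:ℝ)/2)
      rw [h1] at h2
      push_cast at h2 ⊢
      rw [← h2]
    rw [hsq]
    exact (div_eq_mul_inv _ _).symm
  -- assemble
  rw [hsplit, hsub]
  have hfres := fresnel_bound hlam hA hB
  have hamp := hKbound lam hlam
  have hdecomp : S * (∫ u : ℝ in A..B, Complex.exp (-(Complex.I * (lam:ℂ)) * (u:ℂ) ^ 2))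
        + (∫ x : ℝ in a..b, (Complex.sin ((x:ℂ) + β) - S) *
            Complex.exp (-(Complex.I * (lam:ℂ)) * ((x:ℂ) - α) ^ 2))
        - S * 2 * (π:ℂ) / (Complex.I * (γ:ℂ) * (r:ℂ)) ^ ((1:ℂ)/2)
      = S * ((∫ u : ℝ in A..B, Complex.exp (-(Complex.I * (lam:ℂ)) * (u:ℂ) ^ 2))
          - ((π:ℂ) / (Complex.I * (lam:ℂ))) ^ (1/2 : ℂ))
        + (∫ x : ℝ in a..b, (Complex.sin ((x:ℂ) + β) - S) *
            Complex.exp (-(Complex.I * (lam:ℂ)) * ((x:ℂ) - α) ^ 2)) := by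
    rw [hcpow]
    ring
  rw [hdecomp]
  have hb1 : ‖S * ((∫ u : ℝ in A..B, Complex.exp (-(Complex.I * (lam:ℂ)) * (u:ℂ) ^ 2))
      - ((π:ℂ) / (Complex.I * (lam:ℂ))) ^ (1/2 : ℂ))‖ ≤ ‖S‖ * ((1/B + 1/(-A)) / |lam|) := by
    rw [norm_mul]
    exact mul_le_mul_of_nonneg_left hfres (norm_nonneg S)
  have htotal : ‖S * ((∫ u : ℝ in A..B, Complex.exp (-(Complex.I * (lam:ℂ)) * (u:ℂ) ^ 2))
        - ((π:ℂ) / (Complex.I * (lam:ℂ))) ^ (1/2 : ℂ))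
      + (∫ x : ℝ in a..b, (Complex.sin ((x:ℂ) + β) - S) *
          Complex.exp (-(Complex.I * (lam:ℂ)) * ((x:ℂ) - α) ^ 2))‖
      ≤ (‖S‖ * (1/B + 1/(-A)) + K) / |lam| := by
    calc _ ≤ ‖S‖ * ((1/B + 1/(-A)) / |lam|) + K / |lam| :=
          (norm_add_le _ _).trans (add_le_add hb1 hamp)
      _ = (‖S‖ * (1/B + 1/(-A)) + K) / |lam| := by
          rw [← mul_div_assoc, ← add_div]
  refine htotal.trans (le_of_eq ?_)
  have hπpos := Real.pi_pos
  rw [habslam, hC₁def]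
  field_simp
end

section
/- Let a < b be real numbers, β ∈ ℂ, γ ∈ ℝ with γ ≠ 0, and let α be a real number with α ∉ [a,b]. Then there exist constants C > 0 and r₀ such that for every integer r ≥ r₀, | ∫_a^b sin(x+β) e^{(r/(4πi)) γ (x−α)²} dx | ≤ C / r. -/
set_option maxHeartbeats 1000000

open Real MeasureTheory

/-- **Lemma (Gaussian integral with stationary point outside).**
If `a < b`, `γ ∈ ℝ \ {0}`, `β ∈ ℂ` and `α ∈ ℝ` with `α ∉ [a,b]`, then
`|∫_a^b sin(x+β) e^{(r/(4πi)) γ (x−α)²} dx| ≤ C/r` for all sufficiently large integers `r`. -/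
theorem gaussian_integral_stationary_outside (a b : ℝ) (hab : a < b) (β : ℂ)
    (γ : ℝ) (hγ : γ ≠ 0) (α : ℝ) (hα : α ∉ Set.Icc a b) :
    ∃ C : ℝ, 0 < C ∧ ∃ r₀ : ℕ, ∀ r : ℕ, r₀ ≤ r →
      ‖∫ x : ℝ in a..b, Complex.sin ((x : ℂ) + β) *
          Complex.exp (((r : ℂ) / (4 * (π : ℂ) * Complex.I)) * (γ : ℂ) *
            ((x : ℂ) - (α : ℂ)) ^ 2)‖ ≤
        C / (r : ℝ) := by
  classical
  have hπ0 : (π : ℝ) ≠ 0 := Real.pi_ne_zero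
  have hden0 : (4 * (π : ℂ) * Complex.I) ≠ 0 := by
    apply mul_ne_zero (mul_ne_zero (by norm_num) _) Complex.I_ne_zero
    exact_mod_cast Complex.ofReal_ne_zero.mpr hπ0
  set K : ℂ := (γ : ℂ) / (4 * (π : ℂ) * Complex.I) with hKdef
  have hK : K ≠ 0 := div_ne_zero (by exact_mod_cast hγ) hden0
  have hKre : K.re = 0 := by
    simp [hKdef, Complex.div_re, Complex.mul_re, Complex.mul_im]
  -- distance from α to the interval
  obtain ⟨δ, hδ0, hδ⟩ : ∃ δ > 0, ∀ x ∈ Set.Icc a b, δ ≤ |x - α| := by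
    simp only [Set.mem_Icc, not_and, not_le] at hα
    rcases lt_or_ge α a with h | h
    · refine ⟨a - α, by linarith, fun x hx => ?_⟩
      rw [abs_of_pos (by linarith [hx.1])]
      linarith [hx.1]
    · have h2 : b < α := hα h
      refine ⟨α - b, by linarith, fun x hx => ?_⟩
      rw [abs_of_neg (by linarith [hx.2])]
      linarith [hx.2]
  -- bound on sin and cos on the interval
  obtain ⟨z, hz, hzmax⟩ := isCompact_Icc.exists_isMaxOn ⟨a, le_refl a, hab.le⟩
    (Continuous.continuousOn (by fun_prop :
      Continuous (fun x : ℝ => ‖Complex.sin ((x:ℂ)+β)‖ + ‖Complex.cos ((x:ℂ)+β)‖)))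
  set M : ℝ := ‖Complex.sin ((z:ℂ)+β)‖ + ‖Complex.cos ((z:ℂ)+β)‖ + 1 with hMdef
  have hM1 : (1:ℝ) ≤ M := by
    have h1 := norm_nonneg (Complex.sin ((z:ℂ)+β))
    have h2 := norm_nonneg (Complex.cos ((z:ℂ)+β))
    simp only [hMdef]; linarith
  have hM0 : (0:ℝ) < M := by linarith
  have hsinM : ∀ x ∈ Set.Icc a b, ‖Complex.sin ((x:ℂ)+β)‖ ≤ M := by
    intro x hx
    have h1 : ‖Complex.sin ((x:ℂ)+β)‖ + ‖Complex.cos ((x:ℂ)+β)‖ ≤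
        ‖Complex.sin ((z:ℂ)+β)‖ + ‖Complex.cos ((z:ℂ)+β)‖ := hzmax hx
    have h2 : (0:ℝ) ≤ ‖Complex.cos ((x:ℂ)+β)‖ := norm_nonneg _
    simp only [hMdef]; linarith
  have hcosM : ∀ x ∈ Set.Icc a b, ‖Complex.cos ((x:ℂ)+β)‖ ≤ M := by
    intro x hx
    have h1 : ‖Complex.sin ((x:ℂ)+β)‖ + ‖Complex.cos ((x:ℂ)+β)‖ ≤
        ‖Complex.sin ((z:ℂ)+β)‖ + ‖Complex.cos ((z:ℂ)+β)‖ := hzmax hx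
    have h2 : (0:ℝ) ≤ ‖Complex.sin ((x:ℂ)+β)‖ := norm_nonneg _
    simp only [hMdef]; linarith
  set L : ℝ := |a - α| + |b - α| with hLdef
  have hL0 : 0 ≤ L := by positivity
  have hL : ∀ x ∈ Set.Icc a b, |x - α| ≤ L := by
    intro x hx
    have h1 := le_abs_self (b - α)
    have h2 := neg_abs_le (a - α)
    have h3 := abs_nonneg (a - α)
    have h4 := abs_nonneg (b - α)
    rw [abs_le]
    constructor <;> [skip; skip] <;> simp only [hLdef] <;>
      [linarith [hx.1]; linarith [hx.2]]
  set cK : ℝ := ‖K‖ with hcKdef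
  have hcK : 0 < cK := norm_pos_iff.mpr hK
  set C : ℝ := M / (cK * δ) + (b - a) * (M * (L + 1)) / (2 * cK * δ ^ 2) with hCdef
  have hC : 0 < C := by
    have h1 : 0 < M / (cK * δ) := div_pos hM0 (mul_pos hcK hδ0)
    have h2 : 0 < (b - a) * (M * (L + 1)) / (2 * cK * δ ^ 2) :=
      div_pos (mul_pos (by linarith) (mul_pos hM0 (by linarith)))
        (by positivity)
    simp only [hCdef]; linarith
  refine ⟨C, hC, 1, ?_⟩
  intro r hr
  have hr1 : (1:ℝ) ≤ (r:ℝ) := by exact_mod_cast hr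
  have hr0 : (0:ℝ) < (r:ℝ) := by linarith
  have hrC : ((r:ℕ):ℂ) ≠ 0 := by exact_mod_cast hr0.ne'
  set c : ℂ := 2 * K * (r:ℂ) with hcdef
  have hc : c ≠ 0 := mul_ne_zero (mul_ne_zero two_ne_zero hK) hrC
  have hcnorm : ‖c‖ = 2 * cK * (r:ℝ) := by
    simp [hcdef, hcKdef]
  set u : ℝ → ℂ := fun x => Complex.sin ((x:ℂ)+β) / (c * ((x:ℂ) - α)) with hudef
  set u' : ℝ → ℂ := fun x =>
    (Complex.cos ((x:ℂ)+β) * (c * ((x:ℂ) - α)) - Complex.sin ((x:ℂ)+β) * c) /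
      (c * ((x:ℂ) - α)) ^ 2 with hu'def
  set v : ℝ → ℂ := fun x => Complex.exp ((r:ℂ) * K * ((x:ℂ) - α) ^ 2) with hvdef
  set v' : ℝ → ℂ := fun x =>
    Complex.exp ((r:ℂ) * K * ((x:ℂ) - α) ^ 2) * (c * ((x:ℂ) - α)) with hv'def
  have huIcc : Set.uIcc a b = Set.Icc a b := Set.uIcc_of_le hab.le
  have hne : ∀ x ∈ Set.Icc a b, ((x:ℂ) - (α:ℂ)) ≠ 0 := by
    intro x hx h
    have h1 := hδ x hx
    have h2 : x = α := by exact_mod_cast sub_eq_zero.mp h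
    rw [h2] at h1; simp at h1; linarith
  -- derivative facts
  have hid : ∀ x : ℝ, HasDerivAt (fun y : ℝ => ((y:ℂ))) 1 x := fun x =>
    Complex.ofRealCLM.hasDerivAt
  have hsub : ∀ x : ℝ, HasDerivAt (fun y : ℝ => ((y:ℂ) - α)) 1 x := fun x =>
    (hid x).sub_const _
  have hsin : ∀ x : ℝ, HasDerivAt (fun y : ℝ => Complex.sin ((y:ℂ)+β))
      (Complex.cos ((x:ℂ)+β)) x := by
    intro x
    have h2 := (Complex.hasDerivAt_sin ((x:ℂ)+β)).scomp x ((hid x).add_const β)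
    simpa [Function.comp_def] using h2
  have hu : ∀ x ∈ Set.uIcc a b, HasDerivAt u (u' x) x := by
    intro x hx
    rw [huIcc] at hx
    have hdnm : HasDerivAt (fun y : ℝ => c * ((y:ℂ) - α)) c x := by
      simpa using (hsub x).const_mul c
    exact (hsin x).div hdnm (mul_ne_zero hc (hne x hx))
  have hv : ∀ x ∈ Set.uIcc a b, HasDerivAt v (v' x) x := by
    intro x hx
    have h2 := (((hsub x).mul (hsub x)).const_mul ((r:ℂ) * K)).cexp
    have h3 : (fun y:ℝ => Complex.exp ((r:ℂ)*K*(((y:ℂ)-α)*((y:ℂ)-α)))) = v := by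
      funext y; simp only [hvdef]; ring_nf
    simp only [Pi.mul_apply] at h2
    rw [h3] at h2
    convert h2 using 1
    simp only [hv'def, hcdef]
    ring_nf
  -- integrability
  have hcont_num : Continuous (fun x:ℝ =>
      Complex.cos ((x:ℂ)+β) * (c * ((x:ℂ) - α)) - Complex.sin ((x:ℂ)+β) * c) := by
    fun_prop
  have hcont_den : Continuous (fun x:ℝ => (c * ((x:ℂ) - α)) ^ 2) := by fun_prop
  have hu'i : IntervalIntegrable u' volume a b := by
    apply ContinuousOn.intervalIntegrable
    rw [huIcc]
    exact hcont_num.continuousOn.div hcont_den.continuousOn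
      (fun x hx => pow_ne_zero 2 (mul_ne_zero hc (hne x hx)))
  have hv'i : IntervalIntegrable v' volume a b := by
    apply Continuous.intervalIntegrable
    fun_prop
  have hIBP := intervalIntegral.integral_mul_deriv_eq_deriv_mul hu hv hu'i hv'i
  -- rewrite the integrand
  have hEq : Set.EqOn
      (fun x : ℝ => Complex.sin ((x : ℂ) + β) *
        Complex.exp (((r : ℂ) / (4 * (π : ℂ) * Complex.I)) * (γ : ℂ) *
          ((x : ℂ) - (α : ℂ)) ^ 2))
      (fun x => u x * v' x) (Set.uIcc a b) := by
    intro x hx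
    rw [huIcc] at hx
    have hxne := hne x hx
    have hexp : ((r : ℂ) / (4 * (π : ℂ) * Complex.I)) * (γ : ℂ) = (r:ℂ) * K := by
      rw [hKdef]; ring
    simp only [hudef, hv'def, hexp]
    field_simp
  rw [intervalIntegral.integral_congr hEq, hIBP]
  -- norm of the exponential is 1
  have hvnorm : ∀ x : ℝ, ‖v x‖ = 1 := by
    intro x
    have h1 : ((r:ℂ) * K * ((x:ℂ) - (α:ℂ)) ^ 2) = (((r:ℝ) * (x - α)^2 : ℝ) : ℂ) * K := by
      push_cast; ring
    have h2 : ((((r:ℝ) * (x - α)^2 : ℝ) : ℂ) * K).re = 0 := by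
      rw [Complex.re_ofReal_mul, hKre, mul_zero]
    simp only [hvdef]
    rw [Complex.norm_exp, h1, h2, Real.exp_zero]
  -- pointwise bounds
  have hdenlb : ∀ x ∈ Set.Icc a b, 2 * cK * (r:ℝ) * δ ≤ ‖c * ((x:ℂ) - α)‖ := by
    intro x hx
    have h1 : ‖c * ((x:ℂ) - α)‖ = (2 * cK * (r:ℝ)) * |x - α| := by
      rw [norm_mul, hcnorm]
      congr 1
      rw [show ((x:ℂ) - (α:ℂ)) = (((x - α : ℝ)) : ℂ) by push_cast; ring]
      exact Complex.norm_real _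
    rw [h1]
    have h2 := hδ x hx
    nlinarith [mul_le_mul_of_nonneg_left h2 (by positivity : (0:ℝ) ≤ 2 * cK * (r:ℝ))]
  have hub : ∀ x ∈ Set.Icc a b, ‖u x‖ ≤ M / (2 * cK * δ * (r:ℝ)) := by
    intro x hx
    simp only [hudef, norm_div]
    have h1 := hdenlb x hx
    have h2 := hsinM x hx
    have h3 : (0:ℝ) < 2 * cK * δ * (r:ℝ) := by positivity
    calc ‖Complex.sin ((x:ℂ)+β)‖ / ‖c * ((x:ℂ) - α)‖
        ≤ M / (2 * cK * (r:ℝ) * δ) := by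
          apply div_le_div₀ hM0.le h2 (by positivity) (by linarith)
      _ = M / (2 * cK * δ * (r:ℝ)) := by ring_nf
  have hu'b : ∀ x ∈ Set.Icc a b, ‖u' x‖ ≤ M * (L + 1) / (2 * cK * δ ^ 2 * (r:ℝ)) := by
    intro x hx
    simp only [hu'def, norm_div]
    have h1 := hdenlb x hx
    have hxL := hL x hx
    have hnum : ‖Complex.cos ((x:ℂ)+β) * (c * ((x:ℂ) - α)) - Complex.sin ((x:ℂ)+β) * c‖ ≤
        2 * cK * (r:ℝ) * (M * (L + 1)) := by
      have hcos := hcosM x hx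
      have hsin2 := hsinM x hx
      have hxa : ‖c * ((x:ℂ) - α)‖ = (2 * cK * (r:ℝ)) * |x - α| := by
        rw [norm_mul, hcnorm]
        congr 1
        rw [show ((x:ℂ) - (α:ℂ)) = (((x - α : ℝ)) : ℂ) by push_cast; ring]
        exact Complex.norm_real _
      calc ‖Complex.cos ((x:ℂ)+β) * (c * ((x:ℂ) - α)) - Complex.sin ((x:ℂ)+β) * c‖
          ≤ ‖Complex.cos ((x:ℂ)+β) * (c * ((x:ℂ) - α))‖ + ‖Complex.sin ((x:ℂ)+β) * c‖ :=
            norm_sub_le _ _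
        _ = ‖Complex.cos ((x:ℂ)+β)‖ * ‖c * ((x:ℂ) - α)‖ + ‖Complex.sin ((x:ℂ)+β)‖ * ‖c‖ := by
            simp [norm_mul]
        _ ≤ M * ((2 * cK * (r:ℝ)) * L) + M * (2 * cK * (r:ℝ)) := by
            rw [hxa, hcnorm]
            have h4 : (0:ℝ) ≤ 2 * cK * (r:ℝ) := by positivity
            have h6 := norm_nonneg (Complex.cos ((x:ℂ)+β))
            have h7 := norm_nonneg (Complex.sin ((x:ℂ)+β))
            have e1 : ‖Complex.cos ((x:ℂ)+β)‖ * (2 * cK * (r:ℝ) * |x - α|) ≤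
                M * ((2 * cK * (r:ℝ)) * L) := by
              apply mul_le_mul hcos _ (by positivity) hM0.le
              calc 2 * cK * (r:ℝ) * |x - α| ≤ 2 * cK * (r:ℝ) * L :=
                    mul_le_mul_of_nonneg_left hxL h4
                _ = (2 * cK * (r:ℝ)) * L := by ring
            have e2 : ‖Complex.sin ((x:ℂ)+β)‖ * (2 * cK * (r:ℝ)) ≤ M * (2 * cK * (r:ℝ)) :=
              mul_le_mul_of_nonneg_right hsin2 h4
            linarith
        _ = 2 * cK * (r:ℝ) * (M * (L + 1)) := by ring
    have hden2 : (2 * cK * (r:ℝ) * δ) ^ 2 ≤ ‖(c * ((x:ℂ) - α)) ^ 2‖ := by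
      rw [norm_pow]
      have h0 : (0:ℝ) ≤ 2 * cK * (r:ℝ) * δ := by positivity
      nlinarith [norm_nonneg (c * ((x:ℂ) - α))]
    have h3 : (0:ℝ) < (2 * cK * (r:ℝ) * δ) ^ 2 := by positivity
    calc ‖Complex.cos ((x:ℂ)+β) * (c * ((x:ℂ) - α)) - Complex.sin ((x:ℂ)+β) * c‖ /
          ‖(c * ((x:ℂ) - α)) ^ 2‖
        ≤ (2 * cK * (r:ℝ) * (M * (L + 1))) / ((2 * cK * (r:ℝ) * δ) ^ 2) :=
          div_le_div₀ (by positivity) hnum h3 hden2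
      _ = M * (L + 1) / (2 * cK * δ ^ 2 * (r:ℝ)) := by
          rw [div_eq_div_iff (by positivity) (by positivity)]
          ring
  -- bound on the boundary terms and the remaining integral
  have hIb : ‖∫ x in a..b, u' x * v x‖ ≤
      M * (L + 1) / (2 * cK * δ ^ 2 * (r:ℝ)) * |b - a| := by
    apply intervalIntegral.norm_integral_le_of_norm_le_const
    intro x hx
    have hx' : x ∈ Set.Icc a b := by
      rcases Set.uIoc_of_le hab.le ▸ hx with ⟨h1, h2⟩
      exact ⟨h1.le, h2⟩
    rw [norm_mul, hvnorm x, mul_one]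
    exact hu'b x hx'
  have hua := hub a ⟨le_refl a, hab.le⟩
  have hub' := hub b ⟨hab.le, le_refl b⟩
  have habs : |b - a| = b - a := abs_of_pos (by linarith)
  calc ‖u b * v b - u a * v a - ∫ x in a..b, u' x * v x‖
      ≤ ‖u b * v b - u a * v a‖ + ‖∫ x in a..b, u' x * v x‖ := norm_sub_le _ _
    _ ≤ ‖u b * v b‖ + ‖u a * v a‖ + ‖∫ x in a..b, u' x * v x‖ := by
        linarith [norm_sub_le (u b * v b) (u a * v a)]
    _ = ‖u b‖ + ‖u a‖ + ‖∫ x in a..b, u' x * v x‖ := by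
        rw [norm_mul, norm_mul, hvnorm a, hvnorm b, mul_one, mul_one]
    _ ≤ M / (2 * cK * δ * (r:ℝ)) + M / (2 * cK * δ * (r:ℝ)) +
        M * (L + 1) / (2 * cK * δ ^ 2 * (r:ℝ)) * (b - a) := by
        rw [habs] at hIb
        linarith
    _ ≤ C / (r:ℝ) := by
        apply le_of_eq
        have e1 : M / (2 * cK * δ * (r:ℝ)) + M / (2 * cK * δ * (r:ℝ)) =
            M / (cK * δ) / (r:ℝ) := by
          rw [← add_div, div_div, div_eq_div_iff (by positivity) (by positivity)]
          ring
        have e2 : M * (L + 1) / (2 * cK * δ ^ 2 * (r:ℝ)) * (b - a) =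
            (b - a) * (M * (L + 1)) / (2 * cK * δ ^ 2) / (r:ℝ) := by
          rw [div_mul_eq_mul_div, div_div, div_eq_div_iff (by positivity) (by positivity)]
          ring
        rw [e1, e2, hCdef, ← add_div]
end

section
/- With the continued-fraction data below, let r > 0 be a real number, and for 1 ≤ i ≤ k−1 and real x define x_i(x) = (−1)^{k−i} c_{i−1} ( x/q + (−1)^k ∑_{j=i}^{k−1} π/(c_{j−1} c_j) ). Then for every real x with −π + qπ/r < x < π − qπ/r and every i ∈ {1,…,k−1}, one has |x_i(x)| ≤ π − c_{i−1}π/r; in particular −π + π/r ≤ x_i(x) ≤ π − π/r. -/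
open Real

/-- The critical point function
`x_i(x) = (−1)^{k−i} c_{i−1} (x/q + (−1)^k ∑_{j=i}^{k−1} π/(c_{j−1} c_j))`. -/
noncomputable def xcrit (c : ℕ → ℤ) (q : ℤ) (k i : ℕ) (x : ℝ) : ℝ :=
  (-1 : ℝ) ^ (k - i) * (c (i - 1) : ℝ) *
    (x / (q : ℝ) + (-1 : ℝ) ^ k *
      ∑ j ∈ Finset.Icc i (k - 1), π / ((c (j - 1) : ℝ) * (c j : ℝ)))

/-- **Lemma 4.4 of the paper.** With the continued-fraction data, for `r > 0`,
`−π + qπ/r < x < π − qπ/r` and `1 ≤ i ≤ k−1`, one has `|x_i(x)| ≤ π − c_{i−1}π/r`;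
in particular `−π + π/r ≤ x_i(x) ≤ π − π/r`. -/
theorem xcrit_bound (k : ℕ) (hk : 2 ≤ k) (a c : ℕ → ℤ)
    (ha : ∀ i, 1 ≤ i → i ≤ k - 1 → 2 ≤ a i)
    (hc0 : c 0 = 1) (hc1 : c 1 = a 1)
    (hcrec : ∀ i, 2 ≤ i → i ≤ k - 1 → c i = a i * c (i - 1) - c (i - 2))
    (q : ℤ) (hq : q = c (k - 1))
    (r : ℝ) (hr : 0 < r) (x : ℝ)
    (hx1 : -π + (q : ℝ) * π / r < x) (hx2 : x < π - (q : ℝ) * π / r)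
    (i : ℕ) (hi1 : 1 ≤ i) (hi2 : i ≤ k - 1) :
    |xcrit c q k i x| ≤ π - (c (i - 1) : ℝ) * π / r ∧
      -π + π / r ≤ xcrit c q k i x ∧ xcrit c q k i x ≤ π - π / r := by
  have hπ := Real.pi_pos
  -- positivity and strict growth of `c`
  have key : ∀ j, j ≤ k - 1 → 0 < c j ∧ (1 ≤ j → c (j - 1) + 1 ≤ c j) := by
    intro j
    induction j using Nat.strong_induction_on with
    | _ j ih =>
      intro hj
      match j with
      | 0 => exact ⟨by rw [hc0]; norm_num, by omega⟩
      | 1 =>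
        have ha1 := ha 1 le_rfl hj
        refine ⟨by rw [hc1]; omega, fun _ => ?_⟩
        show c 0 + 1 ≤ c 1
        rw [hc0, hc1]; omega
      | (m+2) =>
        have h1 := ih (m+1) (by omega) (by omega)
        have h0 := ih m (by omega) (by omega)
        have hrec := hcrec (m+2) (by omega) hj
        have haj := ha (m+2) (by omega) hj
        have e1 : m + 2 - 1 = m + 1 := rfl
        have e2 : m + 2 - 2 = m := rfl
        rw [e1, e2] at hrec
        have hinc : c m + 1 ≤ c (m+1) := h1.2 (by omega)
        have h2 : 2 * c (m+1) ≤ a (m+2) * c (m+1) :=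
          mul_le_mul_of_nonneg_right haj (by linarith [h1.1])
        constructor
        · rw [hrec]; linarith [h0.1]
        · intro _
          show c (m+1) + 1 ≤ c (m+2)
          rw [hrec]; linarith
  have cpos : ∀ j, j ≤ k - 1 → (0:ℝ) < (c j : ℝ) := by
    intro j hj; exact_mod_cast (key j hj).1
  -- single-term bound
  have term : ∀ j, 1 ≤ j → j ≤ k - 1 →
      π / ((c (j-1) : ℝ) * (c j : ℝ)) ≤ π / (c (j-1):ℝ) - π / (c j : ℝ) := by
    intro j hj1 hj2
    have hA : (0:ℝ) < (c (j-1) : ℝ) := cpos _ (by omega)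
    have hB : (0:ℝ) < (c j : ℝ) := cpos _ hj2
    have hAB : (c (j-1):ℝ) + 1 ≤ (c j : ℝ) := by exact_mod_cast (key j hj2).2 hj1
    rw [div_sub_div _ _ hA.ne' hB.ne', div_le_div_iff₀ (mul_pos hA hB) (mul_pos hA hB)]
    have hmul : 0 ≤ π * ((c j : ℝ) - (c (j-1):ℝ) - 1) :=
      mul_nonneg hπ.le (by linarith)
    nlinarith [mul_pos hA hB]
  -- telescoping bound for the sum
  have tel : ∀ m, i ≤ m → m ≤ k - 1 →
      ∑ j ∈ Finset.Icc i m, π / ((c (j-1):ℝ) * (c j:ℝ)) ≤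
        π / (c (i-1):ℝ) - π / (c m:ℝ) := by
    intro m
    induction m with
    | zero => intro h1 _; omega
    | succ n ih =>
      intro h1 h2
      rcases Nat.lt_or_ge n i with h | h
      · have hni : i = n + 1 := by omega
        subst hni
        rw [Finset.Icc_self, Finset.sum_singleton]
        exact term _ hi1 h2
      · rw [Finset.sum_Icc_succ_top (by omega : i ≤ n + 1)]
        have t := term (n+1) (by omega) h2
        have hih := ih h (by omega)
        have e : n + 1 - 1 = n := rfl
        rw [e] at t
        simp only [Nat.add_sub_cancel]
        linarith
  -- set up abbreviations
  have hqc : (q:ℝ) = (c (k-1) : ℝ) := by exact_mod_cast congrArg Int.cast hq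
  have hqR : (0:ℝ) < (q:ℝ) := by rw [hqc]; exact cpos _ le_rfl
  have hC : (0:ℝ) < (c (i-1):ℝ) := cpos _ (by omega)
  have hC1 : (1:ℝ) ≤ (c (i-1):ℝ) := by exact_mod_cast (key (i-1) (by omega)).1
  set S : ℝ := ∑ j ∈ Finset.Icc i (k-1), π / ((c (j-1):ℝ) * (c j:ℝ)) with hS
  have hS0 : 0 ≤ S := by
    apply Finset.sum_nonneg
    intro j hj
    rw [Finset.mem_Icc] at hj
    have hA : (0:ℝ) < (c (j-1) : ℝ) := cpos _ (by omega)
    have hB : (0:ℝ) < (c j : ℝ) := cpos _ hj.2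
    positivity
  have hSle : S ≤ π / (c (i-1):ℝ) - π / (q:ℝ) := by
    rw [hqc]; exact tel (k-1) hi2 le_rfl
  have habs : |x| ≤ π - (q:ℝ) * π / r := abs_le.2 ⟨by linarith, hx2.le⟩
  -- rewrite |xcrit|
  have h1 : |xcrit c q k i x| = (c (i-1):ℝ) * |x/(q:ℝ) + (-1:ℝ)^k * S| := by
    rw [xcrit, abs_mul, abs_mul, abs_pow, abs_neg, abs_one, one_pow, one_mul,
      abs_of_pos hC]
  have h2 : |x/(q:ℝ) + (-1:ℝ)^k * S| ≤ |x|/(q:ℝ) + S := by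
    calc |x/(q:ℝ) + (-1:ℝ)^k * S| ≤ |x/(q:ℝ)| + |(-1:ℝ)^k * S| := abs_add_le _ _
      _ = |x|/(q:ℝ) + S := by
          rw [abs_div, abs_of_pos hqR, abs_mul, abs_pow, abs_neg, abs_one, one_pow,
            one_mul, abs_of_nonneg hS0]
  have h3 : |x|/(q:ℝ) ≤ π/(q:ℝ) - π/r := by
    calc |x|/(q:ℝ) ≤ (π - (q:ℝ) * π / r)/(q:ℝ) := by gcongr
      _ = π/(q:ℝ) - π/r := by
          field_simp
  have hmain : |xcrit c q k i x| ≤ π - (c (i-1):ℝ) * π / r := by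
    rw [h1]
    calc (c (i-1):ℝ) * |x/(q:ℝ) + (-1:ℝ)^k * S|
        ≤ (c (i-1):ℝ) * (|x|/(q:ℝ) + S) := by
          exact mul_le_mul_of_nonneg_left h2 hC.le
      _ ≤ (c (i-1):ℝ) * (π/(c (i-1):ℝ) - π/r) := by
          apply mul_le_mul_of_nonneg_left _ hC.le
          linarith
      _ = π - (c (i-1):ℝ) * π / r := by field_simp
  refine ⟨hmain, ?_, ?_⟩
  · have h4 : |xcrit c q k i x| ≤ π - π / r := by
      have : π / r ≤ (c (i-1):ℝ) * π / r := by
        rw [div_le_div_iff₀ hr hr]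
        nlinarith [mul_nonneg (mul_nonneg (by linarith : (0:ℝ) ≤ (c (i-1):ℝ) - 1) hπ.le) hr.le]
      linarith
    linarith [(abs_le.1 h4).1]
  · have h4 : |xcrit c q k i x| ≤ π - π / r := by
      have : π / r ≤ (c (i-1):ℝ) * π / r := by
        rw [div_le_div_iff₀ hr hr]
        nlinarith [mul_nonneg (mul_nonneg (by linarith : (0:ℝ) ≤ (c (i-1):ℝ) - 1) hπ.le) hr.le]
      linarith
    linarith [(abs_le.1 h4).2]
end

section
/- With the continued-fraction data below, let r > 0 be a real number, and for 1 ≤ i ≤ k−1 and real x define x′_i(x) = (−1)^{k−i} c_{i−1} ( x/q − (−1)^k ∑_{j=i}^{k−1} π/(c_{j−1} c_j) ). Then for every real x with −π + qπ/r < x < π − qπ/r and every i ∈ {1,…,k−1}, one has |x′_i(x)| ≤ π − c_{i−1}π/r; in particular −π + π/r ≤ x′_i(x) ≤ π − π/r. -/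
open Real

/-- The critical point function
`x′_i(x) = (−1)^{k−i} c_{i−1} (x/q − (−1)^k ∑_{j=i}^{k−1} π/(c_{j−1} c_j))`. -/
noncomputable def xcrit' (c : ℕ → ℤ) (q : ℤ) (k i : ℕ) (x : ℝ) : ℝ :=
  (-1 : ℝ) ^ (k - i) * (c (i - 1) : ℝ) *
    (x / (q : ℝ) - (-1 : ℝ) ^ k *
      ∑ j ∈ Finset.Icc i (k - 1), π / ((c (j - 1) : ℝ) * (c j : ℝ)))

private lemma pi_tel (a b : ℝ) (ha : 1 ≤ a) (hb : a + 1 ≤ b) :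
    π / (a * b) ≤ π / a - π / b := by
  have ha0 : 0 < a := by linarith
  have hb0 : 0 < b := by linarith
  have hπ := Real.pi_pos
  rw [div_sub_div _ _ (ne_of_gt ha0) (ne_of_gt hb0), div_le_div_iff₀ (by positivity) (by positivity)]
  nlinarith [mul_nonneg (mul_nonneg hπ.le (mul_pos ha0 hb0).le)
    (show (0:ℝ) ≤ b - a - 1 by linarith)]

/-- **Lemma 4.7 of the paper.** With the continued-fraction data, for `r > 0`,
`−π + qπ/r < x < π − qπ/r` and `1 ≤ i ≤ k−1`, one has `|x′_i(x)| ≤ π − c_{i−1}π/r`;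
in particular `−π + π/r ≤ x′_i(x) ≤ π − π/r`. -/
theorem xcrit'_bound (k : ℕ) (hk : 2 ≤ k) (a c : ℕ → ℤ)
    (ha : ∀ i, 1 ≤ i → i ≤ k - 1 → 2 ≤ a i)
    (hc0 : c 0 = 1) (hc1 : c 1 = a 1)
    (hcrec : ∀ i, 2 ≤ i → i ≤ k - 1 → c i = a i * c (i - 1) - c (i - 2))
    (q : ℤ) (hq : q = c (k - 1))
    (r : ℝ) (hr : 0 < r) (x : ℝ)
    (hx1 : -π + (q : ℝ) * π / r < x) (hx2 : x < π - (q : ℝ) * π / r)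
    (i : ℕ) (hi1 : 1 ≤ i) (hi2 : i ≤ k - 1) :
    |xcrit' c q k i x| ≤ π - (c (i - 1) : ℝ) * π / r ∧
      -π + π / r ≤ xcrit' c q k i x ∧ xcrit' c q k i x ≤ π - π / r := by
  have hπ := Real.pi_pos
  -- positivity and growth of c
  have key : ∀ j, j ≤ k - 1 → 1 ≤ c j ∧ (1 ≤ j → c (j - 1) + 1 ≤ c j) := by
    intro j
    induction j using Nat.strong_induction_on with
    | _ j ih =>
      intro hj
      match j with
      | 0 => simp [hc0]
      | 1 =>
        have h1 := ha 1 le_rfl hj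
        refine ⟨by rw [hc1]; omega, fun _ => ?_⟩
        rw [hc1]
        simp [hc0]
        omega
      | (m+2) =>
        have h1 := ih (m+1) (by omega) (by omega)
        have h0 := ih m (by omega) (by omega)
        have hrec := hcrec (m+2) (by omega) hj
        have haj := ha (m+2) (by omega) hj
        have h1' : c m + 1 ≤ c (m+1) := h1.2 (by omega)
        have hmul : 2 * c (m+1) ≤ a (m+2) * c (m+1) := by nlinarith [h1.1]
        have hrec' : c (m+2) = a (m+2) * c (m+1) - c m := hrec
        exact ⟨by linarith [h0.1], fun _ => by
          show c (m+1) + 1 ≤ c (m+2); linarith⟩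
  have hmono : ∀ n j, j + n ≤ k - 1 → c j ≤ c (j + n) := by
    intro n
    induction n with
    | zero => intro j _; simp
    | succ n ih =>
      intro j h
      have h1 := ih j (by omega)
      have h2 := (key (j + n + 1) (by omega)).2 (by omega)
      have he : j + (n + 1) = j + n + 1 := rfl
      rw [he]
      have : c (j + n + 1 - 1) = c (j + n) := by norm_num
      rw [this] at h2
      linarith
  have hcpos : ∀ j, j ≤ k - 1 → (1 : ℝ) ≤ (c j : ℝ) := fun j hj => by
    exact_mod_cast (key j hj).1
  have hC1 : (1 : ℝ) ≤ (c (i - 1) : ℝ) := hcpos (i - 1) (by omega)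
  have hq1 : (1 : ℝ) ≤ (q : ℝ) := by rw [hq]; exact hcpos (k - 1) le_rfl
  have hCQ : (c (i - 1) : ℝ) ≤ (q : ℝ) := by
    rw [hq]
    have h := hmono (k - 1 - (i - 1)) (i - 1) (by omega)
    rw [show (i - 1) + (k - 1 - (i - 1)) = k - 1 from by omega] at h
    exact_mod_cast h
  have hQ0 : (0 : ℝ) < (q : ℝ) := by linarith
  have hC0 : (0 : ℝ) < (c (i - 1) : ℝ) := by linarith
  set S : ℝ := ∑ j ∈ Finset.Icc i (k - 1), π / ((c (j - 1) : ℝ) * (c j : ℝ)) with hS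
  have hterm : ∀ j, 1 ≤ j → j ≤ k - 1 →
      π / ((c (j - 1) : ℝ) * (c j : ℝ)) ≤ π / (c (j - 1) : ℝ) - π / (c j : ℝ) := by
    intro j hj1 hj2
    have hA : (1 : ℝ) ≤ (c (j - 1) : ℝ) := hcpos (j - 1) (by omega)
    have hB : (c (j - 1) : ℝ) + 1 ≤ (c j : ℝ) := by
      exact_mod_cast (key j hj2).2 hj1
    exact pi_tel _ _ hA hB
  have hS0 : 0 ≤ S := by
    apply Finset.sum_nonneg
    intro j hj
    rw [Finset.mem_Icc] at hj
    have hA : (1 : ℝ) ≤ (c (j - 1) : ℝ) := hcpos (j - 1) (by omega)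
    have hB : (1 : ℝ) ≤ (c j : ℝ) := hcpos j hj.2
    positivity
  have hsum : ∀ m, i ≤ m → m ≤ k - 1 →
      ∑ j ∈ Finset.Icc i m, π / ((c (j - 1) : ℝ) * (c j : ℝ)) ≤
        π / (c (i - 1) : ℝ) - π / (c m : ℝ) := by
    intro m
    induction m with
    | zero => intro h _; omega
    | succ m ih =>
      intro him hmk
      rcases eq_or_lt_of_le him with heq | hlt
      · rw [← heq, Finset.Icc_self, Finset.sum_singleton]
        exact hterm i hi1 (by omega)
      · have him' : i ≤ m := by omega
        rw [Finset.sum_Icc_succ_top him]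
        simp only [Nat.add_sub_cancel]
        have h1 := ih him' (by omega)
        have h2 := hterm (m + 1) (by omega) hmk
        have : c (m + 1 - 1) = c m := by norm_num
        rw [this] at h2
        linarith
  have hSle : S ≤ π / (c (i - 1) : ℝ) - π / (q : ℝ) := by
    rw [hq]
    exact hsum (k - 1) hi2 le_rfl
  have hxabs : |x| ≤ π - (q : ℝ) * π / r := (abs_lt.mpr ⟨by linarith, hx2⟩).le
  set C : ℝ := (c (i - 1) : ℝ)
  set Q : ℝ := (q : ℝ)
  -- product form of hypotheses
  have hx' : |x| * r ≤ π * r - Q * π := by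
    have := mul_le_mul_of_nonneg_right hxabs hr.le
    have he : (π - Q * π / r) * r = π * r - Q * π := by field_simp
    linarith [he ▸ this]
  have hS' : S * (C * Q) ≤ π * Q - π * C := by
    have := mul_le_mul_of_nonneg_right hSle (by positivity : (0:ℝ) ≤ C * Q)
    have he : (π / C - π / Q) * (C * Q) = π * Q - π * C := by field_simp
    linarith [he ▸ this]
  have goal1 : C * |x| / Q + C * S ≤ π - C * π / r := by
    have hQr : (0 : ℝ) < Q * r := by positivity
    have hkey : (C * |x| / Q + C * S) * (Q * r) ≤ (π - C * π / r) * (Q * r) := by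
      have e1 : (C * |x| / Q + C * S) * (Q * r) = C * (|x| * r) + (S * (C * Q)) * r := by
        field_simp
      have e2 : (π - C * π / r) * (Q * r) = π * Q * r - C * π * Q := by
        field_simp
      rw [e1, e2]
      nlinarith [mul_le_mul_of_nonneg_left hx' (by linarith : (0:ℝ) ≤ C),
        mul_le_mul_of_nonneg_right hS' hr.le]
    exact le_of_mul_le_mul_right hkey hQr
  have htri : |xcrit' c q k i x| ≤ C * |x| / Q + C * S := by
    rw [xcrit']
    have e1 : |(-1 : ℝ) ^ (k - i) * C * (x / Q - (-1 : ℝ) ^ k * S)| =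
        C * |x / Q - (-1 : ℝ) ^ k * S| := by
      rw [abs_mul, abs_mul, abs_pow, abs_neg, abs_one, one_pow, one_mul,
        abs_of_pos hC0]
    rw [e1]
    have e2 : |x / Q - (-1 : ℝ) ^ k * S| ≤ |x| / Q + S := by
      calc |x / Q - (-1 : ℝ) ^ k * S| ≤ |x / Q| + |(-1 : ℝ) ^ k * S| := abs_sub _ _
        _ = |x| / Q + S := by
          rw [abs_div, abs_mul, abs_pow, abs_neg, abs_one, one_pow, one_mul,
            abs_of_pos hQ0, abs_of_nonneg hS0]
    calc C * |x / Q - (-1 : ℝ) ^ k * S| ≤ C * (|x| / Q + S) :=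
          mul_le_mul_of_nonneg_left e2 hC0.le
      _ = C * |x| / Q + C * S := by ring
  have main : |xcrit' c q k i x| ≤ π - C * π / r := le_trans htri goal1
  have habs := abs_le.mp main
  have hCr : π / r ≤ C * π / r := by
    rw [mul_div_assoc]
    exact le_mul_of_one_le_left (by positivity) hC1
  exact ⟨main, by linarith [habs.1], by linarith [habs.2]⟩
end

section
/- Let p, q be integers with q ≠ 0, and let (x,y) ∈ D_ℂ. Define (with log the principal branch of the complex logarithm) LA = 2i(y+x), LA″ = log(1 − e^{−2i(y+x)}), LB = 2i(y−x), LB′ = −log(1 − e^{2i(y−x)}), LB″ = πi − 2i(y−x) + log(1 − e^{2i(y−x)}). Then the following two systems of equations are equivalent: (I) the critical point equations of V⁺: 4x − 2i log(1 − e^{−2i(y+x)}) − 2i log(1 − e^{2i(y−x)}) = 0 and (−2px + 2π)/q + 4y − 2π − 2i log(1 − e^{−2i(y+x)}) + 2i log(1 − e^{2i(y−x)}) = 0; (II) the hyperbolic gluing equations: LA + 2LA″ + LB + 2LB″ = 2πi and p(LB′ − LA″) + q(2πi − 2LA − 4LA″) = 2πi. -/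
open Real

/-- **Lemma 5.1 of the paper.** In `D_ℂ`, with shape parameters `A = e^{2i(y+x)}`,
`B = e^{2i(y−x)}` and logarithms `LA = 2i(y+x)`, `LA″ = log(1 − e^{−2i(y+x)})`,
`LB = 2i(y−x)`, `LB′ = −log(1 − e^{2i(y−x)})`, `LB″ = πi − 2i(y−x) + log(1 − e^{2i(y−x)})`,
the critical point equations of `V⁺` are equivalent to the hyperbolic gluing equations
(the edge equation and the `p/q` Dehn-filling equation). -/
theorem critical_eqns_iff_gluing_eqns_plus (p q : ℤ) (hq : q ≠ 0) (x y : ℂ)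
    (h1 : 0 < (y + x).re) (h2 : (y + x).re < π / 2)
    (h3 : 0 < (y - x).re) (h4 : (y - x).re < π / 2) :
    (4 * x - 2 * Complex.I * Complex.log (1 - Complex.exp (-2 * Complex.I * (y + x)))
        - 2 * Complex.I * Complex.log (1 - Complex.exp (2 * Complex.I * (y - x))) = 0 ∧
      (-2 * (p : ℂ) * x + 2 * (π : ℂ)) / (q : ℂ) + 4 * y - 2 * (π : ℂ)
        - 2 * Complex.I * Complex.log (1 - Complex.exp (-2 * Complex.I * (y + x)))
        + 2 * Complex.I * Complex.log (1 - Complex.exp (2 * Complex.I * (y - x))) = 0)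
    ↔
    (2 * Complex.I * (y + x)
        + 2 * Complex.log (1 - Complex.exp (-2 * Complex.I * (y + x)))
        + 2 * Complex.I * (y - x)
        + 2 * ((π : ℂ) * Complex.I - 2 * Complex.I * (y - x)
            + Complex.log (1 - Complex.exp (2 * Complex.I * (y - x))))
        = 2 * (π : ℂ) * Complex.I ∧
      (p : ℂ) * (-Complex.log (1 - Complex.exp (2 * Complex.I * (y - x)))
          - Complex.log (1 - Complex.exp (-2 * Complex.I * (y + x))))
        + (q : ℂ) * (2 * (π : ℂ) * Complex.I - 2 * (2 * Complex.I * (y + x))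
            - 4 * Complex.log (1 - Complex.exp (-2 * Complex.I * (y + x))))
        = 2 * (π : ℂ) * Complex.I) := by
  have hqc : (q:ℂ) ≠ 0 := Int.cast_ne_zero.mpr hq
  set a := Complex.log (1 - Complex.exp (-2 * Complex.I * (y + x))) with ha
  set b := Complex.log (1 - Complex.exp (2 * Complex.I * (y - x))) with hb
  constructor
  · rintro ⟨e1, e2⟩
    have e2' : -2 * (p:ℂ) * x + 2 * (π:ℂ) + (q:ℂ) * (4 * y - 2 * (π:ℂ)
        - 2 * Complex.I * a + 2 * Complex.I * b) = 0 := by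
      field_simp at e2
      linear_combination e2
    constructor
    · linear_combination Complex.I * e1 + (2*a + 2*b) * Complex.I_sq
    · linear_combination (-Complex.I * ((p:ℂ) + 2*(q:ℂ))/2) * e1 + (-Complex.I) * e2' + (-(p:ℂ)*b - (p:ℂ)*a - 4*(q:ℂ)*a) * Complex.I_sq
  · rintro ⟨g1, g2⟩
    have e1 : 4 * x - 2 * Complex.I * a - 2 * Complex.I * b = 0 := by
      linear_combination (-Complex.I) * g1 + (4*x) * Complex.I_sq
    refine ⟨e1, ?_⟩
    have key : -2 * (p:ℂ) * x + 2 * (π:ℂ) + (q:ℂ) * (4 * y - 2 * (π:ℂ)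
        - 2 * Complex.I * a + 2 * Complex.I * b) = 0 := by
      linear_combination Complex.I * g2 + (Complex.I * ((p:ℂ) + 2*(q:ℂ))/2) * g1 + (-2*(p:ℂ)*x - 2*(π:ℂ)*(q:ℂ) + 4*(q:ℂ)*y + 2*(π:ℂ)) * Complex.I_sq
    field_simp
    linear_combination key
end

section
/- Let p, q be integers with q ≠ 0, and define on D_ℂ the holomorphic function V(x,y) = (−p/q − 2)x² + 2πx/q − 2y² + 2πy − 5π²/6 + Li₂(e^{2i(y+x)}) + Li₂(e^{2i(y−x)}). Let Ω = {(u,v) ∈ ℝ² : 0 < v+u < π/2 and 0 < v−u < π/2}. Then: (1) for every fixed (s,t) ∈ ℝ², the function (u,v) ↦ Im V(u+is, v+it) is strictly concave on the open convex set Ω; (2) for every fixed (u,v) ∈ Ω, the function (s,t) ↦ Im V(u+is, v+it) is strictly convex on ℝ². -/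
open Real MeasureTheory

/-- The dilogarithm `Li₂(w) = −∫₀¹ log(1 − t w)/t dt` for `w ∈ ℂ \ [1,∞)`,
with `log` the principal branch of the complex logarithm. -/
noncomputable def Li2 (w : ℂ) : ℂ :=
  -∫ t : ℝ in (0:ℝ)..1, Complex.log (1 - t * w) / t

/-- The potential function
`V(x,y) = (−p/q − 2)x² + 2πx/q − 2y² + 2πy − 5π²/6 + Li₂(e^{2i(y+x)}) + Li₂(e^{2i(y−x)})`. -/
noncomputable def Vpot (p q : ℤ) (x y : ℂ) : ℂ :=
  (-(p : ℂ) / (q : ℂ) - 2) * x ^ 2 + 2 * (π : ℂ) * x / (q : ℂ) - 2 * y ^ 2 +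
    2 * (π : ℂ) * y - 5 * (π : ℂ) ^ 2 / 6 +
    Li2 (Complex.exp (2 * Complex.I * (y + x))) +
    Li2 (Complex.exp (2 * Complex.I * (y - x)))

open Complex intervalIntegral Metric Set

lemma slit_of_im_pos {w : ℂ} (hw : 0 < w.im) {t : ℝ} (ht : 0 ≤ t) :
    (1 - t * w) ∈ Complex.slitPlane := by
  rcases eq_or_lt_of_le ht with h | h
  · simp [← h, Complex.mem_slitPlane_iff]
  · right
    simp only [Complex.sub_im, Complex.one_im, Complex.mul_im, Complex.ofReal_re,
      Complex.ofReal_im, Complex.one_re]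
    nlinarith

lemma ne_zero_aux {w : ℂ} (hw : 0 < w.im) {t : ℝ} (ht : 0 ≤ t) :
    (1 - t * w) ≠ 0 :=
  Complex.slitPlane_ne_zero (slit_of_im_pos hw ht)

lemma ne_zero_aux' {w : ℂ} (hw : 0 < w.im) (t : ℝ) :
    (1 - t * w) ≠ 0 := by
  rcases le_or_gt 0 t with h | h
  · exact ne_zero_aux hw h
  · intro hc
    have h2 : ((1:ℂ) - t * w).im = 0 := by rw [hc]; rfl
    simp only [Complex.sub_im, Complex.one_im, Complex.mul_im, Complex.ofReal_re,
      Complex.ofReal_im, Complex.one_re] at h2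
    nlinarith

lemma measurable_aux (x : ℂ) :
    Measurable (fun t : ℝ => Complex.log (1 - ↑t * x) / ↑t) :=
  (Complex.measurable_log.comp
      ((continuous_const.sub (Complex.continuous_ofReal.mul continuous_const)).measurable)).div
    Complex.continuous_ofReal.measurable

/-- The integral `∫₀¹ (1-tw)⁻¹ dt = -log(1-w)/w`. -/
lemma integral_inv_one_sub {w : ℂ} (hw : 0 < w.im) :
    (∫ t : ℝ in (0:ℝ)..1, (1 - ↑t * w)⁻¹) = -Complex.log (1 - w) / w := by
  have hw0 : w ≠ 0 := fun h => by simp [h] at hw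
  have key : ∀ t ∈ Set.uIcc (0:ℝ) 1,
      HasDerivAt (fun τ : ℝ => -Complex.log (1 - ↑τ * w) / w) ((1 - ↑t * w)⁻¹) t := by
    intro t ht
    rw [Set.uIcc_of_le zero_le_one] at ht
    have hin : HasDerivAt (fun τ : ℝ => 1 - ↑τ * w) (-w) t := by
      simpa using (((hasDerivAt_id (t:ℂ)).mul_const w).comp_ofReal).const_sub 1
    have hlog : HasDerivAt (fun τ : ℝ => Complex.log (1 - ↑τ * w))
        ((1 - ↑t * w)⁻¹ * (-w)) t := by
      have := (Complex.hasDerivAt_log (slit_of_im_pos hw ht.1)).comp t hin; exact this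
    have := (hlog.neg).div_const w
    refine this.congr_deriv (Eq.symm ?_)
    linear_combination (-(1 - ↑t * w)⁻¹) * mul_inv_cancel₀ hw0
  have hcont : IntervalIntegrable (fun t : ℝ => (1 - ↑t * w)⁻¹) volume 0 1 := by
    apply ContinuousOn.intervalIntegrable
    intro t ht
    rw [Set.uIcc_of_le zero_le_one] at ht
    exact ((continuous_const.sub (Complex.continuous_ofReal.mul continuous_const)).continuousAt.inv₀
      (ne_zero_aux hw ht.1)).continuousWithinAt
  have := intervalIntegral.integral_eq_sub_of_hasDerivAt key hcont
  simp only [this]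
  simp [Complex.log_one]

lemma hasDerivAt_Li2 {w : ℂ} (hw : 0 < w.im) :
    HasDerivAt Li2 (-Complex.log (1 - w) / w) w := by
  have hw0 : w ≠ 0 := fun h => by simp [h] at hw
  set ε : ℝ := w.im / 2 with hε
  have hε0 : 0 < ε := by positivity
  -- points of the closed ball have imaginary part ≥ ε
  have him : ∀ x ∈ closedBall w ε, ε ≤ x.im := by
    intro x hx
    have : |(x - w).im| ≤ ‖x - w‖ := Complex.abs_im_le_norm _
    rw [mem_closedBall, Complex.dist_eq] at hx
    have h2 : |(x - w).im| ≤ ε := this.trans hx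
    rw [abs_le] at h2
    have := h2.1
    simp only [Complex.sub_im] at this
    simp only [hε] at this ⊢
    linarith
  -- uniform lower bound for ‖1 - t x‖ on the compact set
  obtain ⟨m, hmK, hmin⟩ : ∃ m ∈ Set.Icc (0:ℝ) 1 ×ˢ closedBall w ε,
      ∀ p ∈ Set.Icc (0:ℝ) 1 ×ˢ closedBall w ε,
        ‖1 - m.1 * m.2‖ ≤ ‖1 - p.1 * p.2‖ := by
    have hK : IsCompact (Set.Icc (0:ℝ) 1 ×ˢ closedBall w ε) :=
      isCompact_Icc.prod (isCompact_closedBall _ _)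
    have hne : (Set.Icc (0:ℝ) 1 ×ˢ closedBall w ε).Nonempty :=
      ⟨(0, w), by simp [hε0.le]⟩
    obtain ⟨m, hm, hmin⟩ := hK.exists_isMinOn hne
      (continuous_norm.comp
        (continuous_const.sub ((Complex.continuous_ofReal.comp continuous_fst).mul
          continuous_snd))).continuousOn
    exact ⟨m, hm, fun p hp => hmin hp⟩
  set δ : ℝ := ‖1 - m.1 * m.2‖ with hδ
  have hδ0 : 0 < δ := by
    have h1 : 0 < m.2.im := lt_of_lt_of_le hε0 (him _ hmK.2)
    have : (1 - (m.1 : ℂ) * m.2) ≠ 0 := ne_zero_aux h1 hmK.1.1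
    simpa [hδ] using (norm_pos_iff.mpr this)
  -- main application of differentiation under the integral sign
  have main := intervalIntegral.hasDerivAt_integral_of_dominated_loc_of_deriv_le
    (F := fun (x : ℂ) (t : ℝ) => Complex.log (1 - ↑t * x) / ↑t)
    (F' := fun (x : ℂ) (t : ℝ) => -(1 - ↑t * x)⁻¹)
    (x₀ := w) (a := 0) (b := 1) (μ := volume) (s := ball w ε) (bound := fun _ => δ⁻¹) (ball_mem_nhds w hε0)
    ?_ ?_ ?_ ?_ ?_ ?_
  · rcases main with ⟨-, hD⟩
    have h2 : HasDerivAt Li2 (-∫ t : ℝ in (0:ℝ)..1, -(1 - ↑t * w)⁻¹) w := hD.neg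
    rw [intervalIntegral.integral_neg, neg_neg, integral_inv_one_sub hw] at h2
    exact h2
  · exact Filter.Eventually.of_forall fun x => (measurable_aux x).aestronglyMeasurable
  · -- interval integrability of F w
    have hL : ∃ L, ∀ t ∈ Set.Icc (0:ℝ) 1, ‖Complex.log (1 - ↑t * w)‖ ≤ L := by
      apply isCompact_Icc.exists_bound_of_continuousOn
      intro t ht
      exact (((continuous_const.sub
        (Complex.continuous_ofReal.mul continuous_const)).continuousAt).clog
          (slit_of_im_pos hw ht.1)).continuousWithinAt
    obtain ⟨L, hLb⟩ := hL
    have hL0 : 0 ≤ L := le_trans (norm_nonneg _) (hLb 0 (by norm_num))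
    set t₁ : ℝ := min 1 (2⁻¹ * (‖w‖ + 1)⁻¹) with ht₁
    have ht₁0 : 0 < t₁ := lt_min one_pos (by positivity)
    rw [intervalIntegrable_iff, Set.uIoc_of_le zero_le_one]
    apply Measure.integrableOn_of_bounded (M := max (3/2 * ‖w‖) (L / t₁))
    · simp
    · exact (measurable_aux w).aestronglyMeasurable
    · rw [ae_restrict_iff' measurableSet_Ioc]
      apply Filter.Eventually.of_forall
      intro t ht
      have ht0 : 0 < t := ht.1
      have ht1 : t ≤ 1 := ht.2
      rcases le_or_gt t t₁ with h | h
      · -- small t : use the log bound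
        have hsmall : ‖-(↑t * w)‖ ≤ 1/2 := by
          rw [norm_neg, norm_mul, Complex.norm_real, Real.norm_eq_abs, abs_of_pos ht0]
          have h2 : t ≤ 2⁻¹ * (‖w‖ + 1)⁻¹ := h.trans (min_le_right _ _)
          have h3 : ‖w‖ ≤ ‖w‖ + 1 := by linarith
          calc t * ‖w‖ ≤ 2⁻¹ * (‖w‖ + 1)⁻¹ * ‖w‖ := by
                apply mul_le_mul_of_nonneg_right h2 (norm_nonneg _)
            _ ≤ 1/2 := by
                rw [mul_assoc]
                have : (‖w‖ + 1)⁻¹ * ‖w‖ ≤ 1 := by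
                  rw [inv_mul_le_iff₀ (by positivity)]
                  linarith [norm_nonneg w]
                nlinarith
        have hlb := Complex.norm_log_one_add_half_le_self hsmall
        have : (1 : ℂ) + -(↑t * w) = 1 - ↑t * w := by ring
        rw [this] at hlb
        refine le_trans ?_ (le_max_left _ _)
        rw [norm_div, Complex.norm_real, Real.norm_eq_abs, abs_of_pos ht0,
          div_le_iff₀ ht0]
        calc ‖Complex.log (1 - ↑t * w)‖ ≤ 3/2 * ‖-(↑t * w)‖ := hlb
          _ = 3/2 * ‖w‖ * t := by
              rw [norm_neg, norm_mul, Complex.norm_real, Real.norm_eq_abs, abs_of_pos ht0]; ring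
      · -- large t
        refine le_trans ?_ (le_max_right _ _)
        rw [norm_div, Complex.norm_real, Real.norm_eq_abs, abs_of_pos ht0]
        apply div_le_div₀ (by positivity) (hLb t ⟨ht0.le, ht1⟩) ht₁0 h.le
  · -- F' w measurable
    exact ((Continuous.inv₀
      (continuous_const.sub (Complex.continuous_ofReal.mul continuous_const))
      (ne_zero_aux' hw)).neg).aestronglyMeasurable
  · -- bound
    apply Filter.Eventually.of_forall
    intro t ht x hx
    rw [Set.uIoc_of_le zero_le_one] at ht
    have hp : ((t, x) : ℝ × ℂ) ∈ Set.Icc (0:ℝ) 1 ×ˢ closedBall w ε :=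
      ⟨⟨ht.1.le, ht.2⟩, ball_subset_closedBall hx⟩
    have := hmin _ hp
    rw [norm_neg, norm_inv]
    exact inv_anti₀ hδ0 this
  · exact intervalIntegrable_const
  · -- differentiability in x
    apply Filter.Eventually.of_forall
    intro t ht x hx
    rw [Set.uIoc_of_le zero_le_one] at ht
    have ht0 : 0 < t := ht.1
    have hxim : 0 < x.im := lt_of_lt_of_le hε0 (him _ (ball_subset_closedBall hx))
    have hin : HasDerivAt (fun y : ℂ => 1 - ↑t * y) (-(t : ℂ)) x := by
      simpa using ((hasDerivAt_id x).const_mul (t : ℂ)).const_sub 1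
    have hlog : HasDerivAt (fun y : ℂ => Complex.log (1 - ↑t * y))
        ((1 - ↑t * x)⁻¹ * (-(t:ℂ))) x := by
      have := (Complex.hasDerivAt_log (slit_of_im_pos hxim ht0.le)).comp x hin; exact this
    have := hlog.div_const (t : ℂ)
    refine this.congr_deriv (Eq.symm ?_)
    have htne : (t : ℂ) ≠ 0 := by exact_mod_cast ht0.ne'
    rw [eq_div_iff htne]
    ring

lemma im_exp_pos {z : ℂ} (h1 : 0 < z.re) (h2 : z.re < π/2) :
    0 < (Complex.exp (2*Complex.I*z)).im := by
  rw [Complex.exp_im]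
  have hre : (2*Complex.I*z).re = -2*z.im := by
    simp [Complex.mul_re, Complex.mul_im]
  have him : (2*Complex.I*z).im = 2*z.re := by
    simp [Complex.mul_re, Complex.mul_im]
  rw [hre, him]
  exact mul_pos (Real.exp_pos _)
    (Real.sin_pos_of_pos_of_lt_pi (by linarith) (by linarith))

lemma one_sub_slit {w : ℂ} (hw : 0 < w.im) : (1 - w) ∈ Complex.slitPlane := by
  right
  simp only [Complex.sub_im, Complex.one_im]
  linarith

lemma im_div_pos {w : ℂ} (hw : 0 < w.im) : 0 < (w / (1 - w)).im := by
  have hne : (1 - w) ≠ 0 := Complex.slitPlane_ne_zero (one_sub_slit hw)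
  have hn : 0 < Complex.normSq (1 - w) := by rwa [Complex.normSq_pos]
  rw [Complex.div_im]
  simp only [Complex.sub_re, Complex.sub_im, Complex.one_re, Complex.one_im]
  rw [div_sub_div_same]
  have : w.im * (1 - w.re) - w.re * (0 - w.im) = w.im := by ring
  rw [this]
  exact div_pos hw hn

lemma HasDerivAt.im' {f : ℝ → ℂ} {f' : ℂ} {x : ℝ} (hf : HasDerivAt f f' x) :
    HasDerivAt (fun t => (f t).im) f'.im x := by
  simpa [Function.comp_def] using (Complex.imCLM.hasFDerivAt.comp_hasDerivAt x hf)

lemma F1deriv {z : ℂ} (h1 : 0 < z.re) (h2 : z.re < π/2) :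
    HasDerivAt (fun z => Li2 (Complex.exp (2*Complex.I*z)))
      (-2*Complex.I*Complex.log (1 - Complex.exp (2*Complex.I*z))) z := by
  have hw := im_exp_pos h1 h2
  have hexp : HasDerivAt (fun z : ℂ => Complex.exp (2*Complex.I*z))
      (Complex.exp (2*Complex.I*z) * (2*Complex.I)) z := by
    have h0 : HasDerivAt (fun z : ℂ => 2*Complex.I*z) (2*Complex.I) z := by
      simpa using (hasDerivAt_id z).const_mul (2*Complex.I)
    exact (Complex.hasDerivAt_exp _).comp z h0
  have := (hasDerivAt_Li2 hw).comp z hexp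
  refine this.congr_deriv (Eq.symm ?_)
  have hne : Complex.exp (2*Complex.I*z) ≠ 0 := Complex.exp_ne_zero _
  linear_combination (2*Complex.I*Complex.log (1 - Complex.exp (2*Complex.I*z))) * mul_inv_cancel₀ hne

lemma F2deriv {z : ℂ} (h1 : 0 < z.re) (h2 : z.re < π/2) :
    HasDerivAt (fun z => -2*Complex.I*Complex.log (1 - Complex.exp (2*Complex.I*z)))
      (-4*Complex.exp (2*Complex.I*z)/(1 - Complex.exp (2*Complex.I*z))) z := by
  have hw := im_exp_pos h1 h2
  have hexp : HasDerivAt (fun z : ℂ => Complex.exp (2*Complex.I*z))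
      (Complex.exp (2*Complex.I*z) * (2*Complex.I)) z := by
    have h0 : HasDerivAt (fun z : ℂ => 2*Complex.I*z) (2*Complex.I) z := by
      simpa using (hasDerivAt_id z).const_mul (2*Complex.I)
    exact (Complex.hasDerivAt_exp _).comp z h0
  have hin : HasDerivAt (fun z : ℂ => 1 - Complex.exp (2*Complex.I*z))
      (-(Complex.exp (2*Complex.I*z) * (2*Complex.I))) z := hexp.const_sub 1
  have hlog : HasDerivAt (fun z : ℂ => Complex.log (1 - Complex.exp (2*Complex.I*z)))
      ((1 - Complex.exp (2*Complex.I*z))⁻¹ * -(Complex.exp (2*Complex.I*z) * (2*Complex.I))) z :=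
    by have := (Complex.hasDerivAt_log (one_sub_slit hw)).comp z hin; exact this
  have := hlog.const_mul (-2*Complex.I)
  refine this.congr_deriv (Eq.symm ?_)
  have hne : (1 - Complex.exp (2*Complex.I*z)) ≠ 0 :=
    Complex.slitPlane_ne_zero (one_sub_slit hw)
  linear_combination (-4 * cexp (2 * Complex.I * z) *
    (1 - cexp (2 * Complex.I * z))⁻¹) * Complex.I_sq

noncomputable def gaux (c α : ℝ) : ℝ :=
  (Li2 (Complex.exp (2*Complex.I*((α:ℂ) + Complex.I*(c:ℂ))))).im

noncomputable def gaux1 (c α : ℝ) : ℝ :=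
  (-2*Complex.I*Complex.log (1 - Complex.exp (2*Complex.I*((α:ℂ) + Complex.I*(c:ℂ))))).im

lemma gaux_deriv1 (c : ℝ) {α : ℝ} (h1 : 0 < α) (h2 : α < π/2) :
    HasDerivAt (gaux c) (gaux1 c α) α := by
  have hz1 : (0:ℝ) < ((α:ℂ) + Complex.I*(c:ℂ)).re := by simpa using h1
  have hz2 : ((α:ℂ) + Complex.I*(c:ℂ)).re < π/2 := by simpa using h2
  have hF := F1deriv hz1 hz2
  have hid : HasDerivAt (fun z : ℂ => z + Complex.I*(c:ℂ)) 1 (α:ℂ) :=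
    (hasDerivAt_id _).add_const _
  have h3 : HasDerivAt (fun z : ℂ => Li2 (Complex.exp (2*Complex.I*(z + Complex.I*(c:ℂ)))))
      (-2*Complex.I*Complex.log (1 - Complex.exp (2*Complex.I*((α:ℂ) + Complex.I*(c:ℂ))))) (α:ℂ) := by
    simpa [Function.comp_def] using hF.comp (α:ℂ) hid
  exact (h3.comp_ofReal).im'

lemma gaux_deriv2 (c : ℝ) {α : ℝ} (h1 : 0 < α) (h2 : α < π/2) :
    HasDerivAt (gaux1 c)
      ((-4*Complex.exp (2*Complex.I*((α:ℂ) + Complex.I*(c:ℂ))) /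
        (1 - Complex.exp (2*Complex.I*((α:ℂ) + Complex.I*(c:ℂ))))).im) α := by
  have hz1 : (0:ℝ) < ((α:ℂ) + Complex.I*(c:ℂ)).re := by simpa using h1
  have hz2 : ((α:ℂ) + Complex.I*(c:ℂ)).re < π/2 := by simpa using h2
  have hF := F2deriv hz1 hz2
  have hid : HasDerivAt (fun z : ℂ => z + Complex.I*(c:ℂ)) 1 (α:ℂ) :=
    (hasDerivAt_id _).add_const _
  have h3 : HasDerivAt
      (fun z : ℂ => -2*Complex.I*Complex.log (1 - Complex.exp (2*Complex.I*(z + Complex.I*(c:ℂ)))))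
      (-4*Complex.exp (2*Complex.I*((α:ℂ) + Complex.I*(c:ℂ))) /
        (1 - Complex.exp (2*Complex.I*((α:ℂ) + Complex.I*(c:ℂ))))) (α:ℂ) := by
    simpa [Function.comp_def] using hF.comp (α:ℂ) hid
  exact (h3.comp_ofReal).im'

lemma gaux_strictConcave (c : ℝ) : StrictConcaveOn ℝ (Set.Ioo 0 (π/2)) (gaux c) := by
  apply strictConcaveOn_of_deriv2_neg (convex_Ioo _ _)
  · intro α hα
    exact ((gaux_deriv1 c hα.1 hα.2).continuousAt).continuousWithinAt
  · intro α hα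
    rw [interior_Ioo] at hα
    have hev : deriv (gaux c) =ᶠ[nhds α] gaux1 c := by
      filter_upwards [Ioo_mem_nhds hα.1 hα.2] with β hβ
      exact (gaux_deriv1 c hβ.1 hβ.2).deriv
    have h2 : deriv (deriv (gaux c)) α = deriv (gaux1 c) α := hev.deriv_eq
    have h3 : deriv (gaux1 c) α =
        (-4*Complex.exp (2*Complex.I*((α:ℂ) + Complex.I*(c:ℂ))) /
          (1 - Complex.exp (2*Complex.I*((α:ℂ) + Complex.I*(c:ℂ))))).im :=
      (gaux_deriv2 c hα.1 hα.2).deriv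
    have hrw : (deriv^[2] (gaux c)) α = deriv (deriv (gaux c)) α := rfl
    rw [hrw, h2, h3]
    set w := Complex.exp (2*Complex.I*((α:ℂ) + Complex.I*(c:ℂ))) with hw
    have hwim : 0 < w.im := im_exp_pos (by simpa using hα.1) (by simpa using hα.2)
    have hdiv := im_div_pos hwim
    have : (-4*w/(1-w)) = ((-4:ℝ):ℂ) * (w/(1-w)) := by push_cast; ring
    rw [this, Complex.im_ofReal_mul]
    nlinarith

noncomputable def haux (c β : ℝ) : ℝ :=
  (Li2 (Complex.exp (2*Complex.I*((c:ℂ) + Complex.I*(β:ℂ))))).im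

noncomputable def haux1 (c β : ℝ) : ℝ :=
  ((-2*Complex.I*Complex.log (1 - Complex.exp (2*Complex.I*((c:ℂ) + Complex.I*(β:ℂ))))) *
    Complex.I).im

lemma haux_deriv1 {c : ℝ} (h1 : 0 < c) (h2 : c < π/2) (β : ℝ) :
    HasDerivAt (haux c) (haux1 c β) β := by
  have hz1 : (0:ℝ) < ((c:ℂ) + Complex.I*(β:ℂ)).re := by simpa using h1
  have hz2 : ((c:ℂ) + Complex.I*(β:ℂ)).re < π/2 := by simpa using h2
  have hF := F1deriv hz1 hz2
  have hid : HasDerivAt (fun z : ℂ => (c:ℂ) + Complex.I*z) Complex.I (β:ℂ) := by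
    simpa using ((hasDerivAt_id (β:ℂ)).const_mul Complex.I).const_add (c:ℂ)
  have h3 : HasDerivAt (fun z : ℂ => Li2 (Complex.exp (2*Complex.I*((c:ℂ) + Complex.I*z))))
      ((-2*Complex.I*Complex.log
        (1 - Complex.exp (2*Complex.I*((c:ℂ) + Complex.I*(β:ℂ))))) * Complex.I) (β:ℂ) := by
    simpa [Function.comp_def] using hF.comp (β:ℂ) hid
  exact (h3.comp_ofReal).im'

lemma haux_deriv2 {c : ℝ} (h1 : 0 < c) (h2 : c < π/2) (β : ℝ) :
    HasDerivAt (haux1 c)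
      ((-4*Complex.exp (2*Complex.I*((c:ℂ) + Complex.I*(β:ℂ))) /
        (1 - Complex.exp (2*Complex.I*((c:ℂ) + Complex.I*(β:ℂ)))) *
          Complex.I * Complex.I).im) β := by
  have hz1 : (0:ℝ) < ((c:ℂ) + Complex.I*(β:ℂ)).re := by simpa using h1
  have hz2 : ((c:ℂ) + Complex.I*(β:ℂ)).re < π/2 := by simpa using h2
  have hF := F2deriv hz1 hz2
  have hid : HasDerivAt (fun z : ℂ => (c:ℂ) + Complex.I*z) Complex.I (β:ℂ) := by
    simpa using ((hasDerivAt_id (β:ℂ)).const_mul Complex.I).const_add (c:ℂ)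
  have h3 : HasDerivAt
      (fun z : ℂ => -2*Complex.I*Complex.log
        (1 - Complex.exp (2*Complex.I*((c:ℂ) + Complex.I*z))))
      (-4*Complex.exp (2*Complex.I*((c:ℂ) + Complex.I*(β:ℂ))) /
        (1 - Complex.exp (2*Complex.I*((c:ℂ) + Complex.I*(β:ℂ)))) * Complex.I) (β:ℂ) := by
    simpa [Function.comp_def] using hF.comp (β:ℂ) hid
  exact ((h3.mul_const Complex.I).comp_ofReal).im'

lemma haux_strictConvex {c : ℝ} (h1 : 0 < c) (h2 : c < π/2) :
    StrictConvexOn ℝ Set.univ (haux c) := by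
  apply strictConvexOn_of_deriv2_pos convex_univ
  · intro β _
    exact ((haux_deriv1 h1 h2 β).continuousAt).continuousWithinAt
  · intro β _
    have hev : deriv (haux c) =ᶠ[nhds β] haux1 c :=
      Filter.Eventually.of_forall fun γ => (haux_deriv1 h1 h2 γ).deriv
    have hd2 : deriv (deriv (haux c)) β = deriv (haux1 c) β := hev.deriv_eq
    have h3 : deriv (haux1 c) β =
        (-4*Complex.exp (2*Complex.I*((c:ℂ) + Complex.I*(β:ℂ))) /
          (1 - Complex.exp (2*Complex.I*((c:ℂ) + Complex.I*(β:ℂ)))) *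
            Complex.I * Complex.I).im := (haux_deriv2 h1 h2 β).deriv
    have hrw : (deriv^[2] (haux c)) β = deriv (deriv (haux c)) β := rfl
    rw [hrw, hd2, h3]
    set w := Complex.exp (2*Complex.I*((c:ℂ) + Complex.I*(β:ℂ))) with hw
    have hwim : 0 < w.im := im_exp_pos (by simpa using h1) (by simpa using h2)
    have hdiv := im_div_pos hwim
    have : (-4*w/(1-w)*Complex.I*Complex.I) = ((4:ℝ):ℂ) * (w/(1-w)) := by
      have := Complex.I_sq
      push_cast
      linear_combination (-4*w/(1-w)) * Complex.I_sq
    rw [this, Complex.im_ofReal_mul]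
    nlinarith

lemma convex_combo_pos {X Y a b : ℝ} (hX : 0 < X) (hY : 0 < Y) (ha : 0 ≤ a) (hb : 0 ≤ b)
    (hab : a + b = 1) : 0 < a*X + b*Y := by
  rcases eq_or_lt_of_le ha with h | h
  · have hb1 : b = 1 := by linarith
    rw [← h, hb1]; simpa
  · nlinarith [mul_lt_mul_of_pos_left hX h, mul_le_mul_of_nonneg_left hY.le hb]

lemma convex_combo_lt {X Y M a b : ℝ} (hX : X < M) (hY : Y < M) (ha : 0 ≤ a) (hb : 0 ≤ b)
    (hab : a + b = 1) : a*X + b*Y < M := by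
  rcases eq_or_lt_of_le ha with h | h
  · have hb1 : b = 1 := by linarith
    rw [← h, hb1]; simpa
  · have hM : a*M + b*M = M := by linear_combination M * hab
    nlinarith [mul_lt_mul_of_pos_left hX h, mul_le_mul_of_nonneg_left hY.le hb]

lemma combo_concave {g₁ g₂ : ℝ → ℝ} (hg₁ : StrictConcaveOn ℝ (Set.Ioo 0 (π/2)) g₁)
    (hg₂ : StrictConcaveOn ℝ (Set.Ioo 0 (π/2)) g₂) (c₁ c₂ c₃ : ℝ) :
    StrictConcaveOn ℝ
      {uv : ℝ × ℝ | 0 < uv.2 + uv.1 ∧ uv.2 + uv.1 < π / 2 ∧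
        0 < uv.2 - uv.1 ∧ uv.2 - uv.1 < π / 2}
      (fun uv : ℝ × ℝ => c₁*uv.1 + c₂*uv.2 + c₃ + g₁ (uv.2+uv.1) + g₂ (uv.2-uv.1)) := by
  constructor
  · intro x hx y hy a b ha hb hab
    simp only [Set.mem_setOf_eq, Prod.fst_add, Prod.snd_add, Prod.smul_fst, Prod.smul_snd,
      smul_eq_mul] at *
    refine ⟨by linarith [convex_combo_pos hx.1 hy.1 ha hb hab],
      by linarith [convex_combo_lt hx.2.1 hy.2.1 ha hb hab],
      by linarith [convex_combo_pos hx.2.2.1 hy.2.2.1 ha hb hab],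
      by linarith [convex_combo_lt hx.2.2.2 hy.2.2.2 ha hb hab]⟩
  · intro x hx y hy hxy a b ha hb hab
    simp only [Set.mem_setOf_eq] at hx hy
    have hx1 : x.2 + x.1 ∈ Set.Ioo 0 (π/2) := ⟨hx.1, hx.2.1⟩
    have hx2 : x.2 - x.1 ∈ Set.Ioo 0 (π/2) := ⟨hx.2.2.1, hx.2.2.2⟩
    have hy1 : y.2 + y.1 ∈ Set.Ioo 0 (π/2) := ⟨hy.1, hy.2.1⟩
    have hy2 : y.2 - y.1 ∈ Set.Ioo 0 (π/2) := ⟨hy.2.2.1, hy.2.2.2⟩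
    have hcase : x.2 + x.1 ≠ y.2 + y.1 ∨ x.2 - x.1 ≠ y.2 - y.1 := by
      by_contra h
      push_neg at h
      exact hxy (Prod.ext_iff.2 ⟨by linarith [h.1, h.2], by linarith [h.1, h.2]⟩)
    have hP1 : (a • x + b • y).1 = a * x.1 + b * y.1 := by
      simp [Prod.smul_fst, smul_eq_mul]
    have hP2 : (a • x + b • y).2 = a * x.2 + b * y.2 := by
      simp [Prod.smul_snd, smul_eq_mul]
    simp only [smul_eq_mul, hP1, hP2]
    have eA : (a * x.2 + b * y.2) + (a * x.1 + b * y.1) = a*(x.2+x.1) + b*(y.2+y.1) := by ring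
    have eB : (a * x.2 + b * y.2) - (a * x.1 + b * y.1) = a*(x.2-x.1) + b*(y.2-y.1) := by ring
    rw [eA, eB]
    have haff : a*(c₁*x.1 + c₂*x.2 + c₃) + b*(c₁*y.1 + c₂*y.2 + c₃) =
        c₁*(a*x.1 + b*y.1) + c₂*(a*x.2 + b*y.2) + c₃ := by linear_combination c₃ * hab
    rcases hcase with h | h
    · have s1 := hg₁.2 hx1 hy1 h ha hb hab
      have s2 := hg₂.concaveOn.2 hx2 hy2 ha.le hb.le hab
      simp only [smul_eq_mul] at s1 s2
      linarith [s1, s2, haff]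
    · have s1 := hg₁.concaveOn.2 hx1 hy1 ha.le hb.le hab
      have s2 := hg₂.2 hx2 hy2 h ha hb hab
      simp only [smul_eq_mul] at s1 s2
      linarith [s1, s2, haff]

lemma combo_convex {h₁ h₂ : ℝ → ℝ} (hh₁ : StrictConvexOn ℝ Set.univ h₁)
    (hh₂ : StrictConvexOn ℝ Set.univ h₂) (c₁ c₂ c₃ : ℝ) :
    StrictConvexOn ℝ Set.univ
      (fun st : ℝ × ℝ => c₁*st.1 + c₂*st.2 + c₃ + h₁ (st.2+st.1) + h₂ (st.2-st.1)) := by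
  constructor
  · exact convex_univ
  · intro x _ y _ hxy a b ha hb hab
    have hcase : x.2 + x.1 ≠ y.2 + y.1 ∨ x.2 - x.1 ≠ y.2 - y.1 := by
      by_contra h
      push_neg at h
      exact hxy (Prod.ext_iff.2 ⟨by linarith [h.1, h.2], by linarith [h.1, h.2]⟩)
    have hP1 : (a • x + b • y).1 = a * x.1 + b * y.1 := by
      simp [Prod.smul_fst, smul_eq_mul]
    have hP2 : (a • x + b • y).2 = a * x.2 + b * y.2 := by
      simp [Prod.smul_snd, smul_eq_mul]
    simp only [smul_eq_mul, hP1, hP2]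
    have eA : (a * x.2 + b * y.2) + (a * x.1 + b * y.1) = a*(x.2+x.1) + b*(y.2+y.1) := by ring
    have eB : (a * x.2 + b * y.2) - (a * x.1 + b * y.1) = a*(x.2-x.1) + b*(y.2-y.1) := by ring
    rw [eA, eB]
    have haff : a*(c₁*x.1 + c₂*x.2 + c₃) + b*(c₁*y.1 + c₂*y.2 + c₃) =
        c₁*(a*x.1 + b*y.1) + c₂*(a*x.2 + b*y.2) + c₃ := by linear_combination c₃ * hab
    rcases hcase with h | h
    · have s1 := hh₁.2 (Set.mem_univ (x.2+x.1)) (Set.mem_univ (y.2+y.1)) h ha hb hab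
      have s2 := hh₂.convexOn.2 (Set.mem_univ (x.2-x.1)) (Set.mem_univ (y.2-y.1)) ha.le hb.le hab
      simp only [smul_eq_mul] at s1 s2
      linarith [s1, s2, haff]
    · have s1 := hh₁.convexOn.2 (Set.mem_univ (x.2+x.1)) (Set.mem_univ (y.2+y.1)) ha.le hb.le hab
      have s2 := hh₂.2 (Set.mem_univ (x.2-x.1)) (Set.mem_univ (y.2-y.1)) h ha hb hab
      simp only [smul_eq_mul] at s1 s2
      linarith [s1, s2, haff]

lemma Vpot_im_eq (p q : ℤ) (hq : q ≠ 0) (u v s t : ℝ) :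
    (Vpot p q ((u:ℂ) + Complex.I*(s:ℂ)) ((v:ℂ) + Complex.I*(t:ℂ))).im =
      (2*(-(p:ℝ)/(q:ℝ) - 2)*s)*u + (-4*t)*v + (2*π/(q:ℝ)*s + 2*π*t) +
        gaux (t+s) (v+u) + gaux (t-s) (v-u) := by
  have hqc : ((q:ℝ):ℂ) ≠ 0 := by
    simp only [ne_eq, Complex.ofReal_eq_zero, Int.cast_eq_zero]
    exact_mod_cast hq
  have e1 : 2 * Complex.I * (((v:ℂ) + Complex.I*(t:ℂ)) + ((u:ℂ) + Complex.I*(s:ℂ))) =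
      2 * Complex.I * ((((v+u:ℝ)):ℂ) + Complex.I*(((t+s:ℝ)):ℂ)) := by push_cast; ring
  have e2 : 2 * Complex.I * (((v:ℂ) + Complex.I*(t:ℂ)) - ((u:ℂ) + Complex.I*(s:ℂ))) =
      2 * Complex.I * ((((v-u:ℝ)):ℂ) + Complex.I*(((t-s:ℝ)):ℂ)) := by push_cast; ring
  have c1 : (-(p : ℂ) / (q : ℂ) - 2) = (((-(p:ℝ)/(q:ℝ) - 2 : ℝ)) : ℂ) := by push_cast; ring
  have c2 : 2 * (π : ℂ) * ((u:ℂ) + Complex.I*(s:ℂ)) / (q : ℂ) =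
      (((2*π/(q:ℝ) : ℝ)) : ℂ) * ((u:ℂ) + Complex.I*(s:ℂ)) := by
    push_cast
    field_simp
  have c3 : 5 * (π : ℂ) ^ 2 / 6 = (((5*π^2/6 : ℝ)) : ℂ) := by push_cast; ring
  rw [Vpot, e1, e2, c1, c2, c3]
  simp only [gaux, Complex.add_im, Complex.sub_im, Complex.mul_im, Complex.mul_re,
    Complex.add_re, Complex.sub_re, Complex.ofReal_re, Complex.ofReal_im, Complex.I_re,
    Complex.I_im, Complex.re_ofNat, Complex.im_ofNat, Complex.one_re, Complex.one_im,
    pow_two]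
  ring

lemma Vpot_im_eq2 (p q : ℤ) (hq : q ≠ 0) (u v s t : ℝ) :
    (Vpot p q ((u:ℂ) + Complex.I*(s:ℂ)) ((v:ℂ) + Complex.I*(t:ℂ))).im =
      (2*(-(p:ℝ)/(q:ℝ) - 2)*u + 2*π/(q:ℝ))*s + (-4*v + 2*π)*t + 0 +
        haux (v+u) (t+s) + haux (v-u) (t-s) := by
  rw [Vpot_im_eq p q hq u v s t]
  simp only [gaux, haux]
  ring

/-- **Lemma 5.5 of the paper (convexity).** `Im V` is strictly concave in the real parts
`(u,v)` on `Ω = {0 < v+u < π/2, 0 < v−u < π/2}` (for any fixed imaginary parts `(s,t)`),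
and strictly convex in the imaginary parts `(s,t)` on all of `ℝ²`
(for any fixed `(u,v) ∈ Ω`). -/
theorem ImV_concave_convex (p q : ℤ) (hq : q ≠ 0) :
    (∀ s t : ℝ, StrictConcaveOn ℝ
        {uv : ℝ × ℝ | 0 < uv.2 + uv.1 ∧ uv.2 + uv.1 < π / 2 ∧
          0 < uv.2 - uv.1 ∧ uv.2 - uv.1 < π / 2}
        (fun uv : ℝ × ℝ =>
          (Vpot p q ((uv.1 : ℂ) + Complex.I * (s : ℂ))
            ((uv.2 : ℂ) + Complex.I * (t : ℂ))).im)) ∧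
    (∀ u v : ℝ, 0 < v + u → v + u < π / 2 → 0 < v - u → v - u < π / 2 →
      StrictConvexOn ℝ Set.univ
        (fun st : ℝ × ℝ =>
          (Vpot p q ((u : ℂ) + Complex.I * (st.1 : ℂ))
            ((v : ℂ) + Complex.I * (st.2 : ℂ))).im)) := by
  constructor
  · intro s t
    have hfun : (fun uv : ℝ × ℝ =>
        (Vpot p q ((uv.1 : ℂ) + Complex.I * (s : ℂ))
          ((uv.2 : ℂ) + Complex.I * (t : ℂ))).im) =
        fun uv : ℝ × ℝ => (2*(-(p:ℝ)/(q:ℝ) - 2)*s)*uv.1 + (-4*t)*uv.2 +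
          (2*π/(q:ℝ)*s + 2*π*t) + gaux (t+s) (uv.2+uv.1) + gaux (t-s) (uv.2-uv.1) :=
      funext fun uv => Vpot_im_eq p q hq uv.1 uv.2 s t
    rw [hfun]
    exact combo_concave (gaux_strictConcave _) (gaux_strictConcave _) _ _ _
  · intro u v h1 h2 h3 h4
    have hfun : (fun st : ℝ × ℝ =>
        (Vpot p q ((u : ℂ) + Complex.I * (st.1 : ℂ))
          ((v : ℂ) + Complex.I * (st.2 : ℂ))).im) =
        fun st : ℝ × ℝ => (2*(-(p:ℝ)/(q:ℝ) - 2)*u + 2*π/(q:ℝ))*st.1 + (-4*v + 2*π)*st.2 + 0 +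
          haux (v+u) (st.2+st.1) + haux (v-u) (st.2-st.1) :=
      funext fun st => Vpot_im_eq2 p q hq u v st.1 st.2
    rw [hfun]
    exact combo_convex (haux_strictConvex h1 h2) (haux_strictConvex h3 h4) _ _ _
end

section
/- For every ε > 0 there exists δ > 0 such that the function r ↦ ∫_{−ε}^{ε} e^{−r z²} dz − √(π/r) is O(e^{−δ r}) as r → ∞; that is, there exist C > 0 and r₀ such that for all real r ≥ r₀, | ∫_{−ε}^{ε} e^{−r z²} dz − √(π/r) | ≤ C e^{−δ r}. -/
open Real MeasureTheory

/-- **Lemma A.2 (1) of the paper.** For every `ε > 0` there exists `δ > 0` such that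
`∫_{−ε}^{ε} e^{−rz²} dz = √(π/r) + O(e^{−δr})` as `r → ∞`. -/
theorem gaussian_integral_truncated (ε : ℝ) (hε : 0 < ε) :
    ∃ δ : ℝ, 0 < δ ∧ ∃ C : ℝ, 0 < C ∧ ∃ r₀ : ℝ, ∀ r : ℝ, r₀ ≤ r →
      |(∫ z : ℝ in -ε..ε, Real.exp (-r * z ^ 2)) - Real.sqrt (π / r)| ≤
        C * Real.exp (-δ * r) := by
  refine ⟨ε ^ 2, by positivity, Real.sqrt π * Real.exp (ε ^ 2), by positivity, 2,
    fun r hr => ?_⟩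
  have hr1 : (1 : ℝ) < r := by linarith
  have hr0 : (0 : ℝ) < r := by linarith
  have hI : Integrable (fun z : ℝ => Real.exp (-r * z ^ 2)) := integrable_exp_neg_mul_sq hr0
  have hmeas : MeasurableSet (Set.Ioc (-ε) ε) := measurableSet_Ioc
  have hsplit := MeasureTheory.integral_add_compl hmeas hI
  have hivl : (∫ z : ℝ in -ε..ε, Real.exp (-r * z ^ 2))
      = ∫ z in Set.Ioc (-ε) ε, Real.exp (-r * z ^ 2) := by
    rw [intervalIntegral.integral_of_le (by linarith)]
  have hgauss : (∫ z : ℝ, Real.exp (-r * z ^ 2)) = Real.sqrt (π / r) := integral_gaussian r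
  have hdiff : (∫ z in Set.Ioc (-ε) ε, Real.exp (-r * z ^ 2)) - Real.sqrt (π / r)
      = -(∫ z in (Set.Ioc (-ε) ε)ᶜ, Real.exp (-r * z ^ 2)) := by
    rw [← hgauss, ← hsplit]; ring
  rw [hivl, hdiff, abs_neg]
  have hnn : 0 ≤ ∫ z in (Set.Ioc (-ε) ε)ᶜ, Real.exp (-r * z ^ 2) :=
    integral_nonneg fun z => (Real.exp_pos _).le
  rw [abs_of_nonneg hnn]
  have hg : Integrable (fun z : ℝ => Real.exp (-(r - 1) * ε ^ 2) * Real.exp (-1 * z ^ 2)) :=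
    (integrable_exp_neg_mul_sq one_pos).const_mul _
  have hle : (∫ z in (Set.Ioc (-ε) ε)ᶜ, Real.exp (-r * z ^ 2))
      ≤ ∫ z in (Set.Ioc (-ε) ε)ᶜ, Real.exp (-(r - 1) * ε ^ 2) * Real.exp (-1 * z ^ 2) := by
    apply setIntegral_mono_on hI.integrableOn hg.integrableOn hmeas.compl
    intro z hz
    have hz' : z ≤ -ε ∨ ε < z := by
      simp only [Set.mem_compl_iff, Set.mem_Ioc, not_and_or, not_lt, not_le] at hz
      exact hz
    have hz2 : ε ^ 2 ≤ z ^ 2 := by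
      rcases hz' with h | h
      · nlinarith
      · nlinarith
    rw [← Real.exp_add]
    apply Real.exp_le_exp.2
    nlinarith
  have hle2 : (∫ z in (Set.Ioc (-ε) ε)ᶜ, Real.exp (-(r - 1) * ε ^ 2) * Real.exp (-1 * z ^ 2))
      ≤ ∫ z : ℝ, Real.exp (-(r - 1) * ε ^ 2) * Real.exp (-1 * z ^ 2) :=
    setIntegral_le_integral hg (Filter.Eventually.of_forall fun z => by positivity)
  have heq : (∫ z : ℝ, Real.exp (-(r - 1) * ε ^ 2) * Real.exp (-1 * z ^ 2))
      = Real.sqrt π * Real.exp (ε ^ 2) * Real.exp (-ε ^ 2 * r) := by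
    rw [integral_const_mul, integral_gaussian, div_one,
      show (-(r - 1) * ε ^ 2) = ε ^ 2 + -ε ^ 2 * r by ring, Real.exp_add]
    ring
  linarith [hle, hle2, heq.le, heq.ge]
end

section
/- For every ε > 0 there exists δ > 0 such that the function r ↦ ∫_{−ε}^{ε} z² e^{−r z²} dz − (1/2)√(π/r³) is O(e^{−δ r}) as r → ∞; that is, there exist C > 0 and r₀ such that for all real r ≥ r₀, | ∫_{−ε}^{ε} z² e^{−r z²} dz − (1/2)√(π/r³) | ≤ C e^{−δ r}. -/
open Real MeasureTheory Set

lemma gauss_int (b : ℝ) (hb : 0 < b) :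
    Integrable (fun z : ℝ => z ^ 2 * Real.exp (-b * z ^ 2)) := by
  have := integrable_rpow_mul_exp_neg_mul_sq hb (s := 2) (by norm_num)
  simpa [Real.rpow_natCast] using this

lemma gauss_full (r : ℝ) (hr : 0 < r) :
    (∫ z : ℝ, z ^ 2 * Real.exp (-r * z ^ 2)) = (1 / 2) * Real.sqrt (π / r ^ 3) := by
  have h1 : (∫ z : ℝ, z ^ 2 * Real.exp (-r * z ^ 2))
      = 2 * ∫ x in Ioi (0:ℝ), x ^ 2 * Real.exp (-r * x ^ 2) := by
    rw [← integral_comp_abs (f := fun x => x ^ 2 * Real.exp (-r * x ^ 2))]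
    simp [sq_abs]
  have h2 : (∫ x in Ioi (0:ℝ), x ^ 2 * Real.exp (-r * x ^ 2))
      = (∫ x in Ioi (0:ℝ), x ^ (2:ℝ) * Real.exp (-r * x ^ (2:ℝ))) := by
    refine setIntegral_congr_fun measurableSet_Ioi (fun x hx => ?_)
    rw [show ((2:ℝ)) = ((2:ℕ):ℝ) by norm_num, Real.rpow_natCast]
  have h3 := integral_rpow_mul_exp_neg_mul_rpow (p := 2) (q := 2) (b := r)
    (by norm_num) (by norm_num) hr
  have hG : Real.Gamma (((2:ℝ) + 1) / 2) = Real.sqrt π / 2 := by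
    rw [show ((2:ℝ) + 1) / 2 = 1/2 + 1 by norm_num,
      Real.Gamma_add_one (by norm_num), Real.Gamma_one_half_eq]
    ring
  have hs : Real.sqrt (r ^ 3) = r ^ ((3:ℝ)/2) := by
    rw [Real.sqrt_eq_rpow, ← Real.rpow_natCast r 3, ← Real.rpow_mul hr.le]
    norm_num
  have hneg : r ^ (-((2:ℝ) + 1) / 2) = (r ^ ((3:ℝ)/2))⁻¹ := by
    rw [show (-((2:ℝ)+1)/2) = -((3:ℝ)/2) by norm_num, Real.rpow_neg hr.le]
  have hpos : (0:ℝ) < r ^ ((3:ℝ)/2) := Real.rpow_pos_of_pos hr _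
  rw [h1, h2, h3, hG, Real.sqrt_div Real.pi_pos.le, hs, hneg]
  field_simp

/-- **Lemma A.2 (2) of the paper.** For every `ε > 0` there exists `δ > 0` such that
`∫_{−ε}^{ε} z² e^{−rz²} dz = (1/2)√(π/r³) + O(e^{−δr})` as `r → ∞`. -/
theorem gaussian_moment_integral_truncated (ε : ℝ) (hε : 0 < ε) :
    ∃ δ : ℝ, 0 < δ ∧ ∃ C : ℝ, 0 < C ∧ ∃ r₀ : ℝ, ∀ r : ℝ, r₀ ≤ r →
      |(∫ z : ℝ in -ε..ε, z ^ 2 * Real.exp (-r * z ^ 2)) -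
          (1 / 2) * Real.sqrt (π / r ^ 3)| ≤
        C * Real.exp (-δ * r) := by
  set M : ℝ := ∫ z : ℝ, z ^ 2 * Real.exp (-(1/2 : ℝ) * z ^ 2) with hM
  have hM0 : 0 ≤ M := integral_nonneg fun z => by positivity
  refine ⟨ε ^ 2 / 2, by positivity, M + 1, by linarith, 1, fun r hr => ?_⟩
  have hr0 : (0:ℝ) < r := lt_of_lt_of_le one_pos hr
  set f : ℝ → ℝ := fun z => z ^ 2 * Real.exp (-r * z ^ 2) with hf
  set S : Set ℝ := Ioc (-ε) ε with hS
  have hSm : MeasurableSet S := measurableSet_Ioc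
  have hfi : Integrable f := gauss_int r hr0
  have htr : (∫ z : ℝ in -ε..ε, z ^ 2 * Real.exp (-r * z ^ 2)) = ∫ z in S, f z :=
    intervalIntegral.integral_of_le (by linarith)
  have hsplit : (∫ z in S, f z) + (∫ z in Sᶜ, f z) = ∫ z, f z :=
    integral_add_compl hSm hfi
  have hfullr : (∫ z : ℝ, f z) = (1 / 2) * Real.sqrt (π / r ^ 3) := gauss_full r hr0
  have hdiff : (∫ z : ℝ in -ε..ε, z ^ 2 * Real.exp (-r * z ^ 2)) -
      (1 / 2) * Real.sqrt (π / r ^ 3) = -(∫ z in Sᶜ, f z) := by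
    rw [htr, ← hfullr, ← hsplit]; ring
  rw [hdiff, abs_neg, abs_of_nonneg (setIntegral_nonneg hSm.compl fun z _ => by positivity)]
  -- pointwise bound on Sᶜ
  set g : ℝ → ℝ := fun z => Real.exp (-(ε ^ 2 / 2) * r) * (z ^ 2 * Real.exp (-(1/2:ℝ) * z ^ 2))
    with hg
  have hgi : Integrable g := (gauss_int (1/2) (by norm_num)).const_mul _
  have hbound : ∀ z ∈ Sᶜ, f z ≤ g z := by
    intro z hz
    have hz2 : ε ^ 2 ≤ z ^ 2 := by
      rcases not_and_or.mp hz with h | h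
      · push_neg at h
        nlinarith
      · push_neg at h
        nlinarith
    have hexp : -r * z ^ 2 ≤ -(ε ^ 2 / 2) * r + -(1/2:ℝ) * z ^ 2 := by nlinarith
    calc f z ≤ z ^ 2 * Real.exp (-(ε ^ 2 / 2) * r + -(1/2:ℝ) * z ^ 2) := by
          exact mul_le_mul_of_nonneg_left (Real.exp_le_exp.mpr hexp) (by positivity)
      _ = g z := by rw [Real.exp_add]; ring
  have h1 : (∫ z in Sᶜ, f z) ≤ ∫ z in Sᶜ, g z :=
    setIntegral_mono_on hfi.integrableOn hgi.integrableOn hSm.compl hbound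
  have h2 : (∫ z in Sᶜ, g z) ≤ ∫ z, g z :=
    setIntegral_le_integral hgi (Filter.Eventually.of_forall fun z => by positivity)
  have h3 : (∫ z : ℝ, g z) = Real.exp (-(ε ^ 2 / 2) * r) * M := by
    rw [hg, integral_const_mul]
  have : (∫ z in Sᶜ, f z) ≤ Real.exp (-(ε ^ 2 / 2) * r) * M := by
    rw [← h3]; exact h1.trans h2
  have hexp0 : (0:ℝ) < Real.exp (-(ε ^ 2 / 2) * r) := Real.exp_pos _
  nlinarith
end
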